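/- arXiv:2512.24025 — 3 statements merged into one kernel-verified Lean document; each statement's English description precedes it below -/
import Mathlib

section
/- Fix Λ > 0 and let M, T, and 𝔇 = S ∪ L ∪ A be as defined. Then T is a bijection of M onto itself, and M is the disjoint union of the sets T^k(𝔇) for k ∈ ℤ; equivalently, for every p ∈ M there is a unique integer k such that T^{−k}(p) ∈ 𝔇 (where T^{−k} denotes the k-th iterate of the inverse of T). -/
/-- The strip `M = {(x, y) : -2Λ ≤ x + y ≤ 2Λ}`. -/
def Mstrip (Λ : ℝ) : Set (ℝ × ℝ) :=
  {p | -(2 * Λ) ≤ p.1 + p.2 ∧ p.1 + p.2 ≤ 2 * Λ}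

/-- The glide reflection `T (x, y) = (-2Λ - y, 2Λ - x)`, as a permutation of the plane. -/
def Tmap (Λ : ℝ) : Equiv.Perm (ℝ × ℝ) where
  toFun p := (-(2 * Λ) - p.2, 2 * Λ - p.1)
  invFun p := (2 * Λ - p.2, -(2 * Λ) - p.1)
  left_inv := by
    rintro ⟨a, b⟩
    simp only [Prod.mk.injEq]
    constructor <;> ring
  right_inv := by
    rintro ⟨a, b⟩
    simp only [Prod.mk.injEq]
    constructor <;> ring

/-- The half-open square `S = (-Λ, Λ] × [-Λ, Λ)`. -/
def Sset (Λ : ℝ) : Set (ℝ × ℝ) :=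
  {p | -Λ < p.1 ∧ p.1 ≤ Λ ∧ -Λ ≤ p.2 ∧ p.2 < Λ}

/-- The region `L = {(x, y) ∈ M : x ≤ -Λ, y < Λ}`. -/
def Lset (Λ : ℝ) : Set (ℝ × ℝ) :=
  {p | p ∈ Mstrip Λ ∧ p.1 ≤ -Λ ∧ p.2 < Λ}

/-- The region `A = {(x, y) ∈ M : x > -Λ, y ≥ Λ}`. -/
def Aset (Λ : ℝ) : Set (ℝ × ℝ) :=
  {p | p ∈ Mstrip Λ ∧ -Λ < p.1 ∧ Λ ≤ p.2}

/-- The fundamental domain `𝔇 = S ∪ L ∪ A`. -/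
def Dfund (Λ : ℝ) : Set (ℝ × ℝ) := Sset Λ ∪ Lset Λ ∪ Aset Λ

lemma mem_D_iff (Λ : ℝ) (hΛ : 0 < Λ) (p : ℝ × ℝ) (hp : p ∈ Mstrip Λ) :
    p ∈ Dfund Λ ↔
      -(2 * Λ) < p.1 - p.2 + |p.1 + p.2| ∧ p.1 - p.2 + |p.1 + p.2| ≤ 2 * Λ := by
  obtain ⟨x, y⟩ := p
  obtain ⟨hm1, hm2⟩ := hp
  simp only [Dfund, Sset, Lset, Aset, Mstrip, Set.mem_union, Set.mem_setOf_eq] at *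
  rcases abs_cases (x + y) with ⟨h1, h2⟩ | ⟨h1, h2⟩ <;> rw [h1] <;> constructor
  · rintro ((⟨hs1, hs2, hs3, hs4⟩ | ⟨_, hl1, hl2⟩) | ⟨_, ha1, ha2⟩) <;>
      constructor <;> linarith
  · rintro ⟨hb1, hb2⟩
    by_cases hy : y < Λ
    · exact Or.inl (Or.inl ⟨by linarith, by linarith, by linarith, hy⟩)
    · exact Or.inr ⟨⟨hm1, hm2⟩, by linarith, by linarith⟩
  · rintro ((⟨hs1, hs2, hs3, hs4⟩ | ⟨_, hl1, hl2⟩) | ⟨_, ha1, ha2⟩) <;>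
      constructor <;> linarith
  · rintro ⟨hb1, hb2⟩
    by_cases hx : x ≤ -Λ
    · exact Or.inl (Or.inr ⟨⟨hm1, hm2⟩, hx, by linarith⟩)
    · exact Or.inl (Or.inl ⟨by linarith, by linarith, by linarith, by linarith⟩)

lemma Tmap_apply_sum (Λ : ℝ) (p : ℝ × ℝ) :
    (Tmap Λ p).1 + (Tmap Λ p).2 = -(p.1 + p.2) := by
  simp [Tmap]; ring

lemma Tmap_apply_diff (Λ : ℝ) (p : ℝ × ℝ) :
    (Tmap Λ p).1 - (Tmap Λ p).2 = p.1 - p.2 - 4 * Λ := by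
  simp [Tmap]; ring

lemma Tmap_inv_apply_sum (Λ : ℝ) (p : ℝ × ℝ) :
    ((Tmap Λ)⁻¹ p).1 + ((Tmap Λ)⁻¹ p).2 = -(p.1 + p.2) := by
  simp [Tmap, Equiv.Perm.inv_def]; ring

lemma Tmap_inv_apply_diff (Λ : ℝ) (p : ℝ × ℝ) :
    ((Tmap Λ)⁻¹ p).1 - ((Tmap Λ)⁻¹ p).2 = p.1 - p.2 + 4 * Λ := by
  simp [Tmap, Equiv.Perm.inv_def]; ring

lemma Tmap_zpow_spec (Λ : ℝ) : ∀ (n : ℤ) (p : ℝ × ℝ),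
    |((Tmap Λ ^ n) p).1 + ((Tmap Λ ^ n) p).2| = |p.1 + p.2| ∧
      ((Tmap Λ ^ n) p).1 - ((Tmap Λ ^ n) p).2 = p.1 - p.2 - 4 * Λ * n := by
  intro n
  induction n using Int.induction_on with
  | zero => intro p; simp
  | succ n ih =>
    intro p
    have h : (Tmap Λ ^ ((n : ℤ) + 1)) p = (Tmap Λ ^ (n : ℤ)) (Tmap Λ p) := by
      rw [zpow_add_one, Equiv.Perm.mul_apply]
    obtain ⟨h1, h2⟩ := ih (Tmap Λ p)
    rw [h, h1, h2, Tmap_apply_sum, Tmap_apply_diff, abs_neg]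
    refine ⟨rfl, by push_cast; ring⟩
  | pred n ih =>
    intro p
    have h : (Tmap Λ ^ (-(n : ℤ) - 1)) p = (Tmap Λ ^ (-(n : ℤ))) ((Tmap Λ)⁻¹ p) := by
      rw [zpow_sub_one, Equiv.Perm.mul_apply]
    obtain ⟨h1, h2⟩ := ih ((Tmap Λ)⁻¹ p)
    rw [h, h1, h2, Tmap_inv_apply_sum, Tmap_inv_apply_diff, abs_neg]
    refine ⟨rfl, by push_cast; ring⟩

/-- `T` is a bijection of `M` onto itself, and `M` is the disjoint union of the sets
`T^k(𝔇)` for `k ∈ ℤ`: for every `p ∈ M` there is a unique `k ∈ ℤ` with `T^{-k} p ∈ 𝔇`. -/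
theorem Tmap_bijOn_and_unique_fund (Λ : ℝ) (hΛ : 0 < Λ) :
    Set.BijOn (Tmap Λ) (Mstrip Λ) (Mstrip Λ) ∧
      ∀ p ∈ Mstrip Λ, ∃! k : ℤ, (Tmap Λ ^ (-k)) p ∈ Dfund Λ := by
  constructor
  · refine ⟨?_, (Tmap Λ).injective.injOn, ?_⟩
    · intro p hp
      have hs := Tmap_apply_sum Λ p
      exact ⟨by rw [hs]; linarith [hp.2], by rw [hs]; linarith [hp.1]⟩
    · intro q hq
      refine ⟨(Tmap Λ)⁻¹ q, ?_, (Tmap Λ).apply_symm_apply q⟩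
      have hs := Tmap_inv_apply_sum Λ q
      exact ⟨by rw [hs]; linarith [hq.2], by rw [hs]; linarith [hq.1]⟩
  · intro p hp
    set w : ℝ := p.1 - p.2 + |p.1 + p.2| with hw
    have h4 : (0 : ℝ) < 4 * Λ := by linarith
    -- membership of iterates in M
    have hM : ∀ k : ℤ, (Tmap Λ ^ (-k)) p ∈ Mstrip Λ := by
      intro k
      obtain ⟨h1, _⟩ := Tmap_zpow_spec Λ (-k) p
      have habs : |p.1 + p.2| ≤ 2 * Λ := abs_le.mpr ⟨by linarith [hp.1], hp.2⟩
      have := abs_le.mp (h1 ▸ habs)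
      exact ⟨by linarith [this.1], this.2⟩
    have key : ∀ k : ℤ, ((Tmap Λ ^ (-k)) p ∈ Dfund Λ ↔
        -(2 * Λ) < w + 4 * Λ * k ∧ w + 4 * Λ * k ≤ 2 * Λ) := by
      intro k
      obtain ⟨h1, h2⟩ := Tmap_zpow_spec Λ (-k) p
      rw [mem_D_iff Λ hΛ _ (hM k), h1, h2]
      constructor <;> intro h <;> constructor <;> push_cast at * <;> linarith [h.1, h.2]
    set c : ℤ := ⌊(2 * Λ - w) / (4 * Λ)⌋ with hc
    have hfl : (c : ℝ) * (4 * Λ) ≤ 2 * Λ - w := by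
      rw [← le_div_iff₀ h4]
      exact Int.floor_le _
    have hfl' : 2 * Λ - w < ((c : ℝ) + 1) * (4 * Λ) := by
      rw [← div_lt_iff₀ h4]
      exact Int.lt_floor_add_one _
    have hcmem : -(2 * Λ) < w + 4 * Λ * c ∧ w + 4 * Λ * c ≤ 2 * Λ :=
      ⟨by nlinarith, by nlinarith⟩
    refine ⟨c, (key c).mpr hcmem, ?_⟩
    intro k hk
    rw [key] at hk
    have h1 : (k : ℝ) < (c : ℝ) + 1 := by
      have : 4 * Λ * (k : ℝ) < 4 * Λ * ((c : ℝ) + 1) := by linarith [hk.1, hcmem.2]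
      exact lt_of_mul_lt_mul_left this (by linarith)
    have h2 : (c : ℝ) < (k : ℝ) + 1 := by
      have : 4 * Λ * (c : ℝ) < 4 * Λ * ((k : ℝ) + 1) := by linarith [hk.2, hcmem.1]
      exact lt_of_mul_lt_mul_left this (by linarith)
    have h1' : k < c + 1 := by exact_mod_cast h1
    have h2' : c < k + 1 := by exact_mod_cast h2
    omega
end

section
/- Fix Λ > 0, the strip M with partial order ⪯, the glide-reflection T, the fundamental domain 𝔇 = S ∪ L ∪ A, a strictly increasing bijection φ : ℝ → (−Λ, Λ), the flow (T_M)_ε on M, and the interleaving distance d on M, all as defined. Denote S° = (−Λ,Λ)×(−Λ,Λ), L° = {(x,y) : x + y > −2Λ, x < −Λ, y < Λ}, A° = {(x,y) : x + y < 2Λ, x > −Λ, y > Λ}. Let v ∈ M ∖ ∂M and w ∈ M with d(v, w) < ∞, and suppose v ∈ T^k(R) for some k ∈ ℤ, where R is one of the eight sets S°, L°, A°, (−Λ,Λ)×{−Λ}, (−Λ,Λ)×{Λ}, {−Λ}×(−Λ,Λ), {Λ}×(−Λ,Λ), {(Λ,−Λ)}. Then either w ∈ T^k(R), or R is L° or A°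 and w ∈ ∂M. -/
open scoped ENNReal

noncomputable section

/-- The boundary `∂M = {(x, y) ∈ M : |x + y| = 2Λ}`. -/
def bdryM (Λ : ℝ) : Set (ℝ × ℝ) :=
  {p | p ∈ Mstrip Λ ∧ |p.1 + p.2| = 2 * Λ}

/-- The partial order on `M`: `(x, y) ⪯ (x', y')` iff `x ≥ x'` and `y ≤ y'`. -/
def Mle (p q : ℝ × ℝ) : Prop := q.1 ≤ p.1 ∧ p.2 ≤ q.2

/-- The open square `S° = (-Λ, Λ) × (-Λ, Λ)`. -/
def SsetInt (Λ : ℝ) : Set (ℝ × ℝ) :=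
  {p | -Λ < p.1 ∧ p.1 < Λ ∧ -Λ < p.2 ∧ p.2 < Λ}

/-- The open region `L° = {(x, y) : x + y > -2Λ, x < -Λ, y < Λ}`. -/
def LsetInt (Λ : ℝ) : Set (ℝ × ℝ) :=
  {p | -(2 * Λ) < p.1 + p.2 ∧ p.1 < -Λ ∧ p.2 < Λ}

/-- The open region `A° = {(x, y) : x + y < 2Λ, x > -Λ, y > Λ}`. -/
def AsetInt (Λ : ℝ) : Set (ℝ × ℝ) :=
  {p | p.1 + p.2 < 2 * Λ ∧ -Λ < p.1 ∧ Λ < p.2}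

/-- The `truncated translations` `ρ_s` of `[-Λ, Λ]` determined by a strictly increasing
bijection `φ : ℝ → (-Λ, Λ)`: `ρ_s t = φ (s + φ⁻¹ t)` for `t ∈ (-Λ, Λ)`, and
`ρ_s (±Λ) = ±Λ`. -/
def rhoFlow (Λ : ℝ) (φ : ℝ → ℝ) (s t : ℝ) : ℝ :=
  if t ≤ -Λ then -Λ else if Λ ≤ t then Λ else φ (s + Function.invFun φ t)

/-- The interleaving distance on `M` associated to a flow:
`d (v, w) = inf {ε > 0 : v ⪯ flow ε w and w ⪯ flow ε v}` (with `inf ∅ = ∞`). -/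
def dInt (flow : ℝ → ℝ × ℝ → ℝ × ℝ) (v w : ℝ × ℝ) : ℝ≥0∞ :=
  sInf {e : ℝ≥0∞ | ∃ ε : ℝ, 0 < ε ∧ e = ENNReal.ofReal ε ∧
    Mle v (flow ε w) ∧ Mle w (flow ε v)}

section Helpers

variable {Λ : ℝ} {φ : ℝ → ℝ}

lemma RS_Tapp (Λ : ℝ) (p : ℝ × ℝ) : Tmap Λ p = (-(2*Λ) - p.2, 2*Λ - p.1) := rfl

lemma RS_Tinv (Λ : ℝ) (p : ℝ × ℝ) : (Tmap Λ)⁻¹ p = (2*Λ - p.2, -(2*Λ) - p.1) := rfl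

lemma RS_Mle_T_iff (p q : ℝ × ℝ) : Mle (Tmap Λ p) (Tmap Λ q) ↔ Mle p q := by
  simp only [Mle, RS_Tapp]
  constructor <;> rintro ⟨h1, h2⟩ <;> exact ⟨by linarith, by linarith⟩

lemma RS_Mle_Tinv_iff (p q : ℝ × ℝ) : Mle ((Tmap Λ)⁻¹ p) ((Tmap Λ)⁻¹ q) ↔ Mle p q := by
  simp only [Mle, RS_Tinv]
  constructor <;> rintro ⟨h1, h2⟩ <;> exact ⟨by linarith, by linarith⟩

lemma RS_Mle_zpow (k : ℤ) : ∀ p q : ℝ × ℝ,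
    Mle ((Tmap Λ ^ k) p) ((Tmap Λ ^ k) q) ↔ Mle p q := by
  induction k using Int.induction_on with
  | zero => intro p q; simp
  | succ n ih =>
      intro p q
      have e : ∀ r : ℝ × ℝ, (Tmap Λ ^ ((n : ℤ) + 1)) r = (Tmap Λ ^ (n : ℤ)) (Tmap Λ r) := by
        intro r; rw [zpow_add_one, Equiv.Perm.mul_apply]
      rw [e, e, ih, RS_Mle_T_iff]
  | pred n ih =>
      intro p q
      have e : ∀ r : ℝ × ℝ, (Tmap Λ ^ (-(n : ℤ) - 1)) r = (Tmap Λ ^ (-(n : ℤ))) ((Tmap Λ)⁻¹ r) := by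
        intro r; rw [zpow_sub_one, Equiv.Perm.mul_apply]
      rw [e, e, ih, RS_Mle_Tinv_iff]

lemma RS_sum_abs (k : ℤ) : ∀ p : ℝ × ℝ,
    |((Tmap Λ ^ k) p).1 + ((Tmap Λ ^ k) p).2| = |p.1 + p.2| := by
  induction k using Int.induction_on with
  | zero => intro p; simp
  | succ n ih =>
      intro p
      have e : (Tmap Λ ^ ((n : ℤ) + 1)) p = (Tmap Λ ^ (n : ℤ)) (Tmap Λ p) := by
        rw [zpow_add_one, Equiv.Perm.mul_apply]
      rw [e, ih, RS_Tapp]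
      rw [show -(2*Λ) - p.2 + (2*Λ - p.1) = -(p.1 + p.2) by ring, abs_neg]
  | pred n ih =>
      intro p
      have e : (Tmap Λ ^ (-(n : ℤ) - 1)) p = (Tmap Λ ^ (-(n : ℤ))) ((Tmap Λ)⁻¹ p) := by
        rw [zpow_sub_one, Equiv.Perm.mul_apply]
      rw [e, ih, RS_Tinv]
      rw [show 2*Λ - p.2 + (-(2*Λ) - p.1) = -(p.1 + p.2) by ring, abs_neg]

lemma RS_diff_zpow (k : ℤ) : ∀ p : ℝ × ℝ,
    ((Tmap Λ ^ k) p).2 - ((Tmap Λ ^ k) p).1 = p.2 - p.1 + 4*Λ*(k : ℝ) := by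
  induction k using Int.induction_on with
  | zero => intro p; simp
  | succ n ih =>
      intro p
      have e : (Tmap Λ ^ ((n : ℤ) + 1)) p = (Tmap Λ ^ (n : ℤ)) (Tmap Λ p) := by
        rw [zpow_add_one, Equiv.Perm.mul_apply]
      rw [e, ih, RS_Tapp]
      dsimp only
      push_cast
      ring
  | pred n ih =>
      intro p
      have e : (Tmap Λ ^ (-(n : ℤ) - 1)) p = (Tmap Λ ^ (-(n : ℤ))) ((Tmap Λ)⁻¹ p) := by
        rw [zpow_sub_one, Equiv.Perm.mul_apply]
      rw [e, ih, RS_Tinv]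
      dsimp only
      push_cast
      ring

/-- coordinate bounds used for the level argument -/
def RS_Bnd (Λ : ℝ) (r : ℝ × ℝ) : Prop :=
  r.1 ≤ Λ ∧ -Λ ≤ r.2 ∧ (r.1 ≤ -Λ → r.2 < Λ)

lemma RS_levels (hΛ : 0 < Λ) {q' : ℝ × ℝ} (h1 : q'.1 ≤ Λ) (h2 : -Λ ≤ q'.2) :
    ∀ j : ℤ, 1 ≤ j → ((Tmap Λ ^ j) q').1 ≤ -Λ ∧ Λ ≤ ((Tmap Λ ^ j) q').2 := by
  intro j hj
  refine Int.le_induction (motive := fun j _ => ((Tmap Λ ^ j) q').1 ≤ -Λ ∧ Λ ≤ ((Tmap Λ ^ j) q').2)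
    ?_ ?_ j hj
  · show ((Tmap Λ ^ (1:ℤ)) q').1 ≤ -Λ ∧ Λ ≤ ((Tmap Λ ^ (1:ℤ)) q').2
    rw [zpow_one, RS_Tapp]
    constructor <;> simp <;> linarith
  · intro n hn ih
    show ((Tmap Λ ^ (n+1)) q').1 ≤ -Λ ∧ Λ ≤ ((Tmap Λ ^ (n+1)) q').2
    have e : (Tmap Λ ^ (n + 1)) q' = Tmap Λ ((Tmap Λ ^ n) q') := by
      rw [show n + 1 = 1 + n by ring, zpow_add, zpow_one, Equiv.Perm.mul_apply]
    obtain ⟨ha, hb⟩ := ih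
    rw [e, RS_Tapp]
    constructor <;> simp <;> linarith

lemma RS_no_Mle (hΛ : 0 < Λ) {q q' : ℝ × ℝ} (hB : RS_Bnd Λ q)
    (h1 : q'.1 ≤ Λ) (h2 : -Λ ≤ q'.2) {j : ℤ} (hj : 1 ≤ j) :
    ¬ Mle ((Tmap Λ ^ j) q') q := by
  rintro ⟨m1, m2⟩
  obtain ⟨ha, hb⟩ := RS_levels hΛ h1 h2 j hj
  have := hB.2.2 (by linarith)
  linarith

lemma RS_level_le (hΛ : 0 < Λ) {a b : ℝ × ℝ} (hba : RS_Bnd Λ a) (hbb : RS_Bnd Λ b)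
    {k m : ℤ} (h : Mle ((Tmap Λ ^ k) a) ((Tmap Λ ^ m) b)) : k ≤ m := by
  by_contra hc
  push_neg at hc
  have hj : 1 ≤ k - m := by omega
  have h2 : m + (k - m) = k := by omega
  have e : (Tmap Λ ^ k) a = (Tmap Λ ^ m) ((Tmap Λ ^ (k - m)) a) := by
    calc (Tmap Λ ^ k) a = (Tmap Λ ^ (m + (k - m))) a := by rw [h2]
      _ = (Tmap Λ ^ m) ((Tmap Λ ^ (k - m)) a) := by rw [zpow_add, Equiv.Perm.mul_apply]
  rw [e, RS_Mle_zpow] at h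
  exact RS_no_Mle hΛ hbb hba.1 hba.2.1 hj h

end Helpers
section Helpers2

variable {Λ : ℝ} {φ : ℝ → ℝ}

lemma RS_rho_bot (Λ : ℝ) (φ : ℝ → ℝ) (s : ℝ) : rhoFlow Λ φ s (-Λ) = -Λ := by
  unfold rhoFlow; rw [if_pos le_rfl]

lemma RS_rho_top (hΛ : 0 < Λ) (φ : ℝ → ℝ) (s : ℝ) : rhoFlow Λ φ s Λ = Λ := by
  unfold rhoFlow; rw [if_neg (by linarith), if_pos le_rfl]

lemma RS_rho_mem (hφrange : Set.range φ = Set.Ioo (-Λ) Λ) (s : ℝ) {t : ℝ}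
    (h1 : -Λ < t) (h2 : t < Λ) :
    -Λ < rhoFlow Λ φ s t ∧ rhoFlow Λ φ s t < Λ := by
  unfold rhoFlow
  rw [if_neg (by linarith), if_neg (by linarith)]
  have h : φ (s + Function.invFun φ t) ∈ Set.Ioo (-Λ) Λ := by
    rw [← hφrange]; exact Set.mem_range_self _
  exact ⟨h.1, h.2⟩

lemma RS_rho_lt (hφmono : StrictMono φ) (hφrange : Set.range φ = Set.Ioo (-Λ) Λ)
    (s : ℝ) {t t' : ℝ} (h : t < t') (h1 : -Λ < t) (h2 : t' < Λ) :
    rhoFlow Λ φ s t < rhoFlow Λ φ s t' := by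
  have h1' : t < Λ := lt_trans h h2
  have h2' : -Λ < t' := lt_trans h1 h
  have et : φ (Function.invFun φ t) = t :=
    Function.invFun_eq (by rw [← Set.mem_range, hφrange]; exact ⟨h1, h1'⟩)
  have et' : φ (Function.invFun φ t') = t' :=
    Function.invFun_eq (by rw [← Set.mem_range, hφrange]; exact ⟨h2', h2⟩)
  have ea : rhoFlow Λ φ s t = φ (s + Function.invFun φ t) := by
    unfold rhoFlow; rw [if_neg (by linarith), if_neg (by linarith)]
  have eb : rhoFlow Λ φ s t' = φ (s + Function.invFun φ t') := by
    unfold rhoFlow; rw [if_neg (by linarith), if_neg (by linarith)]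
  rw [ea, eb]
  apply hφmono
  have hg : Function.invFun φ t < Function.invFun φ t' := by
    apply hφmono.lt_iff_lt.mp
    rw [et, et']; exact h
  linarith

lemma RS_mem_frak (hΛ : 0 < Λ) {r : ℝ × ℝ}
    (hs1 : -(2*Λ) ≤ r.1 + r.2) (hs2 : r.1 + r.2 ≤ 2*Λ)
    (h1 : |r.1 + r.2| - 2*Λ ≤ r.2 - r.1) (h2 : r.2 - r.1 < |r.1 + r.2| + 2*Λ) :
    r ∈ Sset Λ ∪ Lset Λ ∪ Aset Λ := by
  simp only [Set.mem_union, Sset, Lset, Aset, Mstrip, Set.mem_setOf_eq]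
  rcases le_or_gt 0 (r.1 + r.2) with hu | hu
  · rw [abs_of_nonneg hu] at h1 h2
    by_cases hy : r.2 < Λ
    · exact Or.inl (Or.inl ⟨by linarith, by linarith, by linarith, hy⟩)
    · exact Or.inr ⟨⟨by linarith, by linarith⟩, by linarith, by linarith⟩
  · rw [abs_of_neg hu] at h1 h2
    by_cases hx : -Λ < r.1
    · exact Or.inl (Or.inl ⟨hx, by linarith, by linarith, by linarith⟩)
    · exact Or.inl (Or.inr ⟨⟨by linarith, by linarith⟩, by linarith, by linarith⟩)

lemma RS_decomp (hΛ : 0 < Λ) (w : ℝ × ℝ) (hw : w ∈ Mstrip Λ) :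
    ∃ m : ℤ, ∃ q : ℝ × ℝ, q ∈ Sset Λ ∪ Lset Λ ∪ Aset Λ ∧ w = (Tmap Λ ^ m) q := by
  simp only [Mstrip, Set.mem_setOf_eq] at hw
  obtain ⟨hw1, hw2⟩ := hw
  set u : ℝ := w.1 + w.2 with hu
  set t : ℝ := w.2 - w.1 with ht
  set a : ℝ := (t - |u| - 2*Λ) / (4*Λ) with ha
  set m : ℤ := ⌊a⌋ + 1 with hm
  have h4 : (0:ℝ) < 4*Λ := by linarith
  have hfa : a * (4*Λ) = t - |u| - 2*Λ := div_mul_cancel₀ _ (ne_of_gt h4)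
  have hf1 : (⌊a⌋ : ℝ) ≤ a := Int.floor_le a
  have hf2 : a < (⌊a⌋ : ℝ) + 1 := Int.lt_floor_add_one a
  have hmr1 : (m : ℝ) ≤ a + 1 := by rw [hm]; push_cast; linarith
  have hmr2 : a < (m : ℝ) := by rw [hm]; push_cast; linarith
  have hml : (m:ℝ) * (4*Λ) ≤ (a + 1) * (4*Λ) := by
    exact mul_le_mul_of_nonneg_right hmr1 h4.le
  have hmg : a * (4*Λ) < (m:ℝ) * (4*Λ) := by
    exact mul_lt_mul_of_pos_right hmr2 h4
  refine ⟨m, (Tmap Λ ^ (-m)) w, ?_, ?_⟩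
  · have hdiff : ((Tmap Λ ^ (-m)) w).2 - ((Tmap Λ ^ (-m)) w).1 = t + 4*Λ*((-m : ℤ) : ℝ) :=
      RS_diff_zpow (-m) w
    have hsum : |((Tmap Λ ^ (-m)) w).1 + ((Tmap Λ ^ (-m)) w).2| = |u| := RS_sum_abs (-m) w
    have habs : |u| ≤ 2*Λ := abs_le.mpr ⟨by linarith, by linarith⟩
    have hstrip := abs_le.mp (hsum ▸ habs : |((Tmap Λ ^ (-m)) w).1 + ((Tmap Λ ^ (-m)) w).2| ≤ 2*Λ)
    push_cast at hdiff
    refine RS_mem_frak hΛ (by linarith [hstrip.1]) hstrip.2 ?_ ?_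
    · rw [hdiff, hsum]; nlinarith
    · rw [hdiff, hsum]; nlinarith
  · have e : (Tmap Λ ^ m) ((Tmap Λ ^ (-m)) w) = w := by
      rw [← Equiv.Perm.mul_apply, ← zpow_add, show m + -m = 0 by omega, zpow_zero,
        Equiv.Perm.one_apply]
    exact e.symm

end Helpers2
section Helpers3

variable {Λ : ℝ} {φ : ℝ → ℝ}

/-- the twelve pieces, for a pair of points -/
def RS_PP (Λ : ℝ) (q q₂ : ℝ × ℝ) : Prop :=
  (q ∈ SsetInt Λ ∧ q₂ ∈ SsetInt Λ) ∨
  (q ∈ LsetInt Λ ∧ q₂ ∈ LsetInt Λ) ∨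
  (q ∈ AsetInt Λ ∧ q₂ ∈ AsetInt Λ) ∨
  (q ∈ Set.Ioo (-Λ) Λ ×ˢ ({-Λ} : Set ℝ) ∧ q₂ ∈ Set.Ioo (-Λ) Λ ×ˢ ({-Λ} : Set ℝ)) ∨
  (q ∈ Set.Ioo (-Λ) Λ ×ˢ ({Λ} : Set ℝ) ∧ q₂ ∈ Set.Ioo (-Λ) Λ ×ˢ ({Λ} : Set ℝ)) ∨
  (q ∈ ({-Λ} : Set ℝ) ×ˢ Set.Ioo (-Λ) Λ ∧ q₂ ∈ ({-Λ} : Set ℝ) ×ˢ Set.Ioo (-Λ) Λ) ∨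
  (q ∈ ({Λ} : Set ℝ) ×ˢ Set.Ioo (-Λ) Λ ∧ q₂ ∈ ({Λ} : Set ℝ) ×ˢ Set.Ioo (-Λ) Λ) ∨
  (q ∈ ({(Λ, -Λ)} : Set (ℝ × ℝ)) ∧ q₂ ∈ ({(Λ, -Λ)} : Set (ℝ × ℝ))) ∨
  ((q.1 = -Λ ∧ q.2 = -Λ) ∧ (q₂.1 = -Λ ∧ q₂.2 = -Λ)) ∨
  ((q.1 + q.2 = -(2*Λ) ∧ q.1 < -Λ ∧ q.2 < Λ) ∧
    (q₂.1 + q₂.2 = -(2*Λ) ∧ q₂.1 < -Λ ∧ q₂.2 < Λ)) ∨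
  ((q.1 = Λ ∧ q.2 = Λ) ∧ (q₂.1 = Λ ∧ q₂.2 = Λ)) ∨
  ((q.1 + q.2 = 2*Λ ∧ -Λ < q.1 ∧ Λ < q.2) ∧
    (q₂.1 + q₂.2 = 2*Λ ∧ -Λ < q₂.1 ∧ Λ < q₂.2))

lemma RS_classify (hΛ : 0 < Λ) {q : ℝ × ℝ} (hq : q ∈ Sset Λ ∪ Lset Λ ∪ Aset Λ) :
    (q ∈ SsetInt Λ) ∨ (q ∈ LsetInt Λ) ∨ (q ∈ AsetInt Λ) ∨
    (q ∈ Set.Ioo (-Λ) Λ ×ˢ ({-Λ} : Set ℝ)) ∨ (q ∈ Set.Ioo (-Λ) Λ ×ˢ ({Λ} : Set ℝ)) ∨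
    (q ∈ ({-Λ} : Set ℝ) ×ˢ Set.Ioo (-Λ) Λ) ∨ (q ∈ ({Λ} : Set ℝ) ×ˢ Set.Ioo (-Λ) Λ) ∨
    (q ∈ ({(Λ, -Λ)} : Set (ℝ × ℝ))) ∨
    (q.1 = -Λ ∧ q.2 = -Λ) ∨ (q.1 + q.2 = -(2*Λ) ∧ q.1 < -Λ ∧ q.2 < Λ) ∨
    (q.1 = Λ ∧ q.2 = Λ) ∨ (q.1 + q.2 = 2*Λ ∧ -Λ < q.1 ∧ Λ < q.2) := by
  simp only [Set.mem_union, Sset, Lset, Aset, Mstrip, Set.mem_setOf_eq] at hq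
  simp only [SsetInt, LsetInt, AsetInt, Set.mem_setOf_eq, Set.mem_prod, Set.mem_Ioo,
    Set.mem_singleton_iff, Prod.ext_iff]
  rcases hq with (⟨h1, h2, h3, h4⟩ | ⟨⟨hs1, hs2⟩, h2, h3⟩) | ⟨⟨hs1, hs2⟩, h2, h3⟩
  · rcases eq_or_lt_of_le h2 with hx | hx
    · rcases eq_or_lt_of_le h3 with hy | hy
      · exact Or.inr (Or.inr (Or.inr (Or.inr (Or.inr (Or.inr (Or.inr (Or.inl
          ⟨hx, hy.symm⟩)))))))
      · exact Or.inr (Or.inr (Or.inr (Or.inr (Or.inr (Or.inr (Or.inl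
          ⟨hx, hy, h4⟩))))))
    · rcases eq_or_lt_of_le h3 with hy | hy
      · exact Or.inr (Or.inr (Or.inr (Or.inl ⟨⟨h1, hx⟩, hy.symm⟩)))
      · exact Or.inl ⟨h1, hx, hy, h4⟩
  · rcases eq_or_lt_of_le hs1 with hsum | hsum
    · rcases eq_or_lt_of_le h2 with hx | hx
      · refine Or.inr (Or.inr (Or.inr (Or.inr (Or.inr (Or.inr (Or.inr (Or.inr (Or.inl
          ⟨hx, by linarith⟩))))))))
      · exact Or.inr (Or.inr (Or.inr (Or.inr (Or.inr (Or.inr (Or.inr (Or.inr (Or.inr (Or.inl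
          ⟨hsum.symm, hx, h3⟩)))))))))
    · rcases eq_or_lt_of_le h2 with hx | hx
      · exact Or.inr (Or.inr (Or.inr (Or.inr (Or.inr (Or.inl ⟨hx, by linarith, h3⟩)))))
      · exact Or.inr (Or.inl ⟨hsum, hx, h3⟩)
  · rcases eq_or_lt_of_le hs2 with hsum | hsum
    · rcases eq_or_lt_of_le h3 with hy | hy
      · refine Or.inr (Or.inr (Or.inr (Or.inr (Or.inr (Or.inr (Or.inr (Or.inr (Or.inr (Or.inr (Or.inl
          ⟨by linarith, hy.symm⟩))))))))))
      · exact Or.inr (Or.inr (Or.inr (Or.inr (Or.inr (Or.inr (Or.inr (Or.inr (Or.inr (Or.inr (Or.inr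
          ⟨hsum, h2, hy⟩))))))))))
    · rcases eq_or_lt_of_le h3 with hy | hy
      · exact Or.inr (Or.inr (Or.inr (Or.inr (Or.inl ⟨⟨h2, by linarith⟩, hy.symm⟩))))
      · exact Or.inr (Or.inr (Or.inl ⟨hsum, h2, hy⟩))

lemma RS_PPB (hΛ : 0 < Λ) {q q₂ : ℝ × ℝ} (h : RS_PP Λ q q₂) :
    RS_Bnd Λ q ∧ RS_Bnd Λ q₂ := by
  unfold RS_Bnd
  rcases h with ⟨hq, hq₂⟩ | ⟨hq, hq₂⟩ | ⟨hq, hq₂⟩ | ⟨hq, hq₂⟩ | ⟨hq, hq₂⟩ | ⟨hq, hq₂⟩ |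
    ⟨hq, hq₂⟩ | ⟨hq, hq₂⟩ | ⟨hq, hq₂⟩ | ⟨hq, hq₂⟩ | ⟨hq, hq₂⟩ | ⟨hq, hq₂⟩ <;>
  (try simp only [SsetInt, LsetInt, AsetInt, Set.mem_setOf_eq, Set.mem_prod, Set.mem_Ioo,
      Set.mem_singleton_iff, Prod.ext_iff] at hq) <;>
  (try simp only [SsetInt, LsetInt, AsetInt, Set.mem_setOf_eq, Set.mem_prod, Set.mem_Ioo,
      Set.mem_singleton_iff, Prod.ext_iff] at hq₂) <;>
  (first
    | obtain ⟨hqa, hqb, hqc, hqd⟩ := hq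
    | obtain ⟨⟨hqa, hqb⟩, hqc⟩ := hq
    | obtain ⟨hqa, hqb, hqc⟩ := hq
    | obtain ⟨hqa, hqb⟩ := hq) <;>
  (first
    | obtain ⟨hsa, hsb, hsc, hsd⟩ := hq₂
    | obtain ⟨⟨hsa, hsb⟩, hsc⟩ := hq₂
    | obtain ⟨hsa, hsb, hsc⟩ := hq₂
    | obtain ⟨hsa, hsb⟩ := hq₂) <;>
  exact ⟨⟨by linarith, by linarith, fun h => by linarith⟩,
    ⟨by linarith, by linarith, fun h => by linarith⟩⟩

lemma RS_RB (hΛ : 0 < Λ) {R : Set (ℝ × ℝ)}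
    (hR : R = SsetInt Λ ∨ R = LsetInt Λ ∨ R = AsetInt Λ ∨
      R = Set.Ioo (-Λ) Λ ×ˢ ({-Λ} : Set ℝ) ∨ R = Set.Ioo (-Λ) Λ ×ˢ ({Λ} : Set ℝ) ∨
      R = ({-Λ} : Set ℝ) ×ˢ Set.Ioo (-Λ) Λ ∨ R = ({Λ} : Set ℝ) ×ˢ Set.Ioo (-Λ) Λ ∨
      R = ({(Λ, -Λ)} : Set (ℝ × ℝ)))
    {p : ℝ × ℝ} (hp : p ∈ R) : RS_Bnd Λ p := by
  unfold RS_Bnd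
  rcases hR with rfl | rfl | rfl | rfl | rfl | rfl | rfl | rfl <;>
  simp only [SsetInt, LsetInt, AsetInt, Set.mem_setOf_eq, Set.mem_prod, Set.mem_Ioo,
    Set.mem_singleton_iff, Prod.ext_iff] at hp <;>
  (first
    | obtain ⟨hpa, hpb, hpc, hpd⟩ := hp
    | obtain ⟨⟨hpa, hpb⟩, hpc⟩ := hp
    | obtain ⟨hpa, hpb, hpc⟩ := hp
    | obtain ⟨hpa, hpb⟩ := hp) <;>
  exact ⟨by linarith, by linarith, fun h => by linarith⟩

end Helpers3
section Helpers4

variable {Λ : ℝ}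

set_option maxHeartbeats 2000000 in
lemma RS_core (hΛ : 0 < Λ) (R : Set (ℝ × ℝ))
    (hR : R = SsetInt Λ ∨ R = LsetInt Λ ∨ R = AsetInt Λ ∨
      R = Set.Ioo (-Λ) Λ ×ˢ ({-Λ} : Set ℝ) ∨ R = Set.Ioo (-Λ) Λ ×ˢ ({Λ} : Set ℝ) ∨
      R = ({-Λ} : Set ℝ) ×ˢ Set.Ioo (-Λ) Λ ∨ R = ({Λ} : Set ℝ) ×ˢ Set.Ioo (-Λ) Λ ∨
      R = ({(Λ, -Λ)} : Set (ℝ × ℝ)))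
    {p p₂ q q₂ : ℝ × ℝ} (hp : p ∈ R) (hp₂ : p₂ ∈ R) (hpp : RS_PP Λ q q₂)
    (h1 : Mle p q₂) (h2 : Mle q p₂) :
    q ∈ R ∨ ((R = LsetInt Λ ∨ R = AsetInt Λ) ∧ |q.1 + q.2| = 2*Λ) := by
  simp only [Mle] at h1 h2
  obtain ⟨h1a, h1b⟩ := h1
  obtain ⟨h2a, h2b⟩ := h2
  rcases hR with rfl | rfl | rfl | rfl | rfl | rfl | rfl | rfl <;>
  (simp only [SsetInt, LsetInt, AsetInt, Set.mem_setOf_eq, Set.mem_prod, Set.mem_Ioo,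
      Set.mem_singleton_iff, Prod.ext_iff] at hp hp₂
   (first
    | obtain ⟨hpa, hpb, hpc, hpd⟩ := hp
    | obtain ⟨⟨hpa, hpb⟩, hpc⟩ := hp
    | obtain ⟨hpa, hpb, hpc⟩ := hp
    | obtain ⟨hpa, hpb⟩ := hp)
   (first
    | obtain ⟨hra, hrb, hrc, hrd⟩ := hp₂
    | obtain ⟨⟨hra, hrb⟩, hrc⟩ := hp₂
    | obtain ⟨hra, hrb, hrc⟩ := hp₂
    | obtain ⟨hra, hrb⟩ := hp₂)
   rcases hpp with ⟨hq, hq₂⟩ | ⟨hq, hq₂⟩ | ⟨hq, hq₂⟩ | ⟨hq, hq₂⟩ | ⟨hq, hq₂⟩ | ⟨hq, hq₂⟩ |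
     ⟨hq, hq₂⟩ | ⟨hq, hq₂⟩ | ⟨hq, hq₂⟩ | ⟨hq, hq₂⟩ | ⟨hq, hq₂⟩ | ⟨hq, hq₂⟩ <;>
   (try simp only [SsetInt, LsetInt, AsetInt, Set.mem_setOf_eq, Set.mem_prod, Set.mem_Ioo,
        Set.mem_singleton_iff, Prod.ext_iff] at hq) <;>
   (try simp only [SsetInt, LsetInt, AsetInt, Set.mem_setOf_eq, Set.mem_prod, Set.mem_Ioo,
        Set.mem_singleton_iff, Prod.ext_iff] at hq₂) <;>
   (first
    | obtain ⟨hqa, hqb, hqc, hqd⟩ := hq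
    | obtain ⟨⟨hqa, hqb⟩, hqc⟩ := hq
    | obtain ⟨hqa, hqb, hqc⟩ := hq
    | obtain ⟨hqa, hqb⟩ := hq) <;>
   (first
    | obtain ⟨hsa, hsb, hsc, hsd⟩ := hq₂
    | obtain ⟨⟨hsa, hsb⟩, hsc⟩ := hq₂
    | obtain ⟨hsa, hsb, hsc⟩ := hq₂
    | obtain ⟨hsa, hsb⟩ := hq₂) <;>
   (first
    | (left
       simp only [SsetInt, LsetInt, AsetInt, Set.mem_setOf_eq, Set.mem_prod, Set.mem_Ioo,
         Set.mem_singleton_iff, Prod.ext_iff]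
       first
        | exact ⟨hqa, hqb, hqc, hqd⟩
        | exact ⟨⟨hqa, hqb⟩, hqc⟩
        | exact ⟨hqa, hqb, hqc⟩
        | exact ⟨hqa, hqb⟩)
    | (right
       refine ⟨?_, ?_⟩
       · first
          | exact Or.inl rfl
          | exact Or.inr rfl
       · rw [abs_eq (by linarith : (0:ℝ) ≤ 2*Λ)]
         first
          | (left; linarith)
          | (right; linarith))
    | (exfalso; linarith)))

end Helpers4
/-- If `v ∈ M ∖ ∂M` and `w ∈ M` are at finite interleaving distance and `v ∈ T^k(R)`
for one of the eight invariant regions `R`, then either `w ∈ T^k(R)`, or `R` is `L°`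
or `A°` and `w ∈ ∂M`. -/
theorem regions_separated (Λ : ℝ) (hΛ : 0 < Λ) (φ : ℝ → ℝ) (hφmono : StrictMono φ)
    (hφrange : Set.range φ = Set.Ioo (-Λ) Λ)
    (flow : ℝ → ℝ × ℝ → ℝ × ℝ)
    (hflowS : ∀ ε : ℝ, 0 ≤ ε → ∀ k : ℤ, ∀ p ∈ Sset Λ,
      flow ε ((Tmap Λ ^ k) p) =
        (Tmap Λ ^ k) (rhoFlow Λ φ (-ε) p.1, rhoFlow Λ φ ε p.2))
    (hflowL : ∀ ε : ℝ, 0 ≤ ε → ∀ k : ℤ, ∀ p ∈ Lset Λ,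
      flow ε ((Tmap Λ ^ k) p) =
        (Tmap Λ ^ k) (-(2 * Λ) - rhoFlow Λ φ ε (-(2 * Λ) - p.1), rhoFlow Λ φ ε p.2))
    (hflowA : ∀ ε : ℝ, 0 ≤ ε → ∀ k : ℤ, ∀ p ∈ Aset Λ,
      flow ε ((Tmap Λ ^ k) p) =
        (Tmap Λ ^ k) (rhoFlow Λ φ (-ε) p.1, 2 * Λ - rhoFlow Λ φ (-ε) (2 * Λ - p.2)))
    (v w : ℝ × ℝ) (hv : v ∈ Mstrip Λ) (hvb : v ∉ bdryM Λ) (hw : w ∈ Mstrip Λ)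
    (hd : dInt flow v w ≠ ⊤) (k : ℤ) (R : Set (ℝ × ℝ))
    (hR : R = SsetInt Λ ∨ R = LsetInt Λ ∨ R = AsetInt Λ ∨
      R = Set.Ioo (-Λ) Λ ×ˢ ({-Λ} : Set ℝ) ∨ R = Set.Ioo (-Λ) Λ ×ˢ ({Λ} : Set ℝ) ∨
      R = ({-Λ} : Set ℝ) ×ˢ Set.Ioo (-Λ) Λ ∨ R = ({Λ} : Set ℝ) ×ˢ Set.Ioo (-Λ) Λ ∨
      R = ({(Λ, -Λ)} : Set (ℝ × ℝ)))
    (hvR : v ∈ (Tmap Λ ^ k) '' R) :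
    w ∈ (Tmap Λ ^ k) '' R ∨ ((R = LsetInt Λ ∨ R = AsetInt Λ) ∧ w ∈ bdryM Λ) := by
  have hne : Set.Nonempty {e : ℝ≥0∞ | ∃ ε : ℝ, 0 < ε ∧ e = ENNReal.ofReal ε ∧
      Mle v (flow ε w) ∧ Mle w (flow ε v)} := by
    rw [Set.nonempty_iff_ne_empty]
    intro hcon
    exact hd (by unfold dInt; rw [hcon, sInf_empty])
  obtain ⟨e, ε, hε, -, hvw, hwv⟩ := hne
  obtain ⟨p, hpR, hvp⟩ := hvR
  obtain ⟨m, q, hqD, hwq⟩ := RS_decomp hΛ w hw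
  subst hwq
  subst hvp
  have hεle : (0:ℝ) ≤ ε := hε.le
  have keyp : ∃ p₂ : ℝ × ℝ, flow ε ((Tmap Λ ^ k) p) = (Tmap Λ ^ k) p₂ ∧ p₂ ∈ R := by
    have hR' := hR
    rcases hR' with rfl | rfl | rfl | rfl | rfl | rfl | rfl | rfl
    · -- S°
      simp only [SsetInt, Set.mem_setOf_eq] at hpR
      obtain ⟨a1, a2, a3, a4⟩ := hpR
      have hqS : p ∈ Sset Λ := by
        simp only [Sset, Set.mem_setOf_eq]; exact ⟨a1, a2.le, a3.le, a4⟩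
      obtain ⟨c1, c2⟩ := RS_rho_mem hφrange (-ε) a1 a2
      obtain ⟨d1, d2⟩ := RS_rho_mem hφrange ε a3 a4
      refine ⟨_, hflowS ε hεle k p hqS, ?_⟩
      simp only [SsetInt, Set.mem_setOf_eq]
      exact ⟨c1, c2, d1, d2⟩
    · -- L°
      simp only [LsetInt, Set.mem_setOf_eq] at hpR
      obtain ⟨a1, a2, a3⟩ := hpR
      have e1 : -Λ < -(2*Λ) - p.1 := by linarith
      have e2 : -(2*Λ) - p.1 < Λ := by linarith
      have e3 : -Λ < p.2 := by linarith
      have hqL : p ∈ Lset Λ := by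
        simp only [Lset, Mstrip, Set.mem_setOf_eq]
        exact ⟨⟨by linarith, by linarith⟩, a2.le, a3⟩
      obtain ⟨c1, c2⟩ := RS_rho_mem hφrange ε e1 e2
      obtain ⟨d1, d2⟩ := RS_rho_mem hφrange ε e3 a3
      have hlt := RS_rho_lt hφmono hφrange ε (by linarith : -(2*Λ) - p.1 < p.2) e1 a3
      refine ⟨_, hflowL ε hεle k p hqL, ?_⟩
      simp only [LsetInt, Set.mem_setOf_eq]
      try dsimp only
      refine ⟨by linarith, by linarith, by linarith⟩
    · -- A°
      simp only [AsetInt, Set.mem_setOf_eq] at hpR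
      obtain ⟨a1, a2, a3⟩ := hpR
      have e1 : -Λ < 2*Λ - p.2 := by linarith
      have e2 : 2*Λ - p.2 < Λ := by linarith
      have e3 : p.1 < Λ := by linarith
      have hqA : p ∈ Aset Λ := by
        simp only [Aset, Mstrip, Set.mem_setOf_eq]
        exact ⟨⟨by linarith, by linarith⟩, a2, a3.le⟩
      obtain ⟨c1, c2⟩ := RS_rho_mem hφrange (-ε) a2 e3
      obtain ⟨d1, d2⟩ := RS_rho_mem hφrange (-ε) e1 e2
      have hlt := RS_rho_lt hφmono hφrange (-ε) (by linarith : p.1 < 2*Λ - p.2) a2 e2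
      refine ⟨_, hflowA ε hεle k p hqA, ?_⟩
      simp only [AsetInt, Set.mem_setOf_eq]
      try dsimp only
      refine ⟨by linarith, by linarith, by linarith⟩
    · -- bottom edge
      simp only [Set.mem_prod, Set.mem_Ioo, Set.mem_singleton_iff] at hpR
      obtain ⟨⟨a1, a2⟩, a3⟩ := hpR
      have hqS : p ∈ Sset Λ := by
        simp only [Sset, Set.mem_setOf_eq]
        exact ⟨a1, a2.le, le_of_eq a3.symm, by rw [a3]; linarith⟩
      obtain ⟨c1, c2⟩ := RS_rho_mem hφrange (-ε) a1 a2
      refine ⟨_, hflowS ε hεle k p hqS, ?_⟩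
      simp only [Set.mem_prod, Set.mem_Ioo, Set.mem_singleton_iff]
      try dsimp only
      exact ⟨⟨c1, c2⟩, by rw [a3, RS_rho_bot]⟩
    · -- top edge
      simp only [Set.mem_prod, Set.mem_Ioo, Set.mem_singleton_iff] at hpR
      obtain ⟨⟨a1, a2⟩, a3⟩ := hpR
      have hqA : p ∈ Aset Λ := by
        simp only [Aset, Mstrip, Set.mem_setOf_eq]
        exact ⟨⟨by linarith, by linarith⟩, a1, le_of_eq a3.symm⟩
      obtain ⟨c1, c2⟩ := RS_rho_mem hφrange (-ε) a1 a2
      have e : 2*Λ - p.2 = Λ := by rw [a3]; ring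
      refine ⟨_, hflowA ε hεle k p hqA, ?_⟩
      simp only [Set.mem_prod, Set.mem_Ioo, Set.mem_singleton_iff]
      try dsimp only
      refine ⟨⟨c1, c2⟩, ?_⟩
      rw [e, RS_rho_top hΛ]; ring
    · -- left edge
      simp only [Set.mem_prod, Set.mem_Ioo, Set.mem_singleton_iff] at hpR
      obtain ⟨a1, a2, a3⟩ := hpR
      have hqL : p ∈ Lset Λ := by
        simp only [Lset, Mstrip, Set.mem_setOf_eq]
        exact ⟨⟨by linarith, by linarith⟩, le_of_eq a1, a3⟩
      obtain ⟨c1, c2⟩ := RS_rho_mem hφrange ε a2 a3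
      have e : -(2*Λ) - p.1 = -Λ := by rw [a1]; ring
      refine ⟨_, hflowL ε hεle k p hqL, ?_⟩
      simp only [Set.mem_prod, Set.mem_Ioo, Set.mem_singleton_iff]
      try dsimp only
      refine ⟨?_, c1, c2⟩
      rw [e, RS_rho_bot]; ring
    · -- right edge
      simp only [Set.mem_prod, Set.mem_Ioo, Set.mem_singleton_iff] at hpR
      obtain ⟨a1, a2, a3⟩ := hpR
      have hqS : p ∈ Sset Λ := by
        simp only [Sset, Set.mem_setOf_eq]
        exact ⟨by linarith, le_of_eq a1, a2.le, a3⟩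
      obtain ⟨c1, c2⟩ := RS_rho_mem hφrange ε a2 a3
      refine ⟨_, hflowS ε hεle k p hqS, ?_⟩
      simp only [Set.mem_prod, Set.mem_Ioo, Set.mem_singleton_iff]
      try dsimp only
      exact ⟨by rw [a1, RS_rho_top hΛ], c1, c2⟩
    · -- corner
      simp only [Set.mem_singleton_iff, Prod.ext_iff] at hpR
      obtain ⟨a1, a2⟩ := hpR
      have hqS : p ∈ Sset Λ := by
        simp only [Sset, Set.mem_setOf_eq]
        exact ⟨by linarith, le_of_eq a1, le_of_eq a2.symm, by rw [a2]; linarith⟩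
      refine ⟨_, hflowS ε hεle k p hqS, ?_⟩
      simp only [Set.mem_singleton_iff, Prod.ext_iff]
      try dsimp only
      exact ⟨by rw [a1, RS_rho_top hΛ], by rw [a2, RS_rho_bot]⟩
  obtain ⟨p₂, hfv, hp₂R⟩ := keyp
  have hclass := RS_classify hΛ hqD
  have key : ∃ q₂ : ℝ × ℝ, flow ε ((Tmap Λ ^ m) q) = (Tmap Λ ^ m) q₂ ∧ RS_PP Λ q q₂ := by
    unfold RS_PP
    rcases hclass with h | h | h | h | h | h | h | h | h | h | h | h
    · -- S°
      have h' := h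
      simp only [SsetInt, Set.mem_setOf_eq] at h'
      obtain ⟨a1, a2, a3, a4⟩ := h'
      have hqS : q ∈ Sset Λ := by
        simp only [Sset, Set.mem_setOf_eq]; exact ⟨a1, a2.le, a3.le, a4⟩
      obtain ⟨c1, c2⟩ := RS_rho_mem hφrange (-ε) a1 a2
      obtain ⟨d1, d2⟩ := RS_rho_mem hφrange ε a3 a4
      refine ⟨_, hflowS ε hεle m q hqS, Or.inl ⟨h, ?_⟩⟩
      simp only [SsetInt, Set.mem_setOf_eq]
      exact ⟨c1, c2, d1, d2⟩
    · -- L°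
      have h' := h
      simp only [LsetInt, Set.mem_setOf_eq] at h'
      obtain ⟨a1, a2, a3⟩ := h'
      have e1 : -Λ < -(2*Λ) - q.1 := by linarith
      have e2 : -(2*Λ) - q.1 < Λ := by linarith
      have e3 : -Λ < q.2 := by linarith
      have hqL : q ∈ Lset Λ := by
        simp only [Lset, Mstrip, Set.mem_setOf_eq]
        exact ⟨⟨by linarith, by linarith⟩, a2.le, a3⟩
      obtain ⟨c1, c2⟩ := RS_rho_mem hφrange ε e1 e2
      obtain ⟨d1, d2⟩ := RS_rho_mem hφrange ε e3 a3
      have hlt := RS_rho_lt hφmono hφrange ε (by linarith : -(2*Λ) - q.1 < q.2) e1 a3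
      refine ⟨_, hflowL ε hεle m q hqL, Or.inr (Or.inl ⟨h, ?_⟩)⟩
      simp only [LsetInt, Set.mem_setOf_eq]
      try dsimp only
      refine ⟨by linarith, by linarith, by linarith⟩
    · -- A°
      have h' := h
      simp only [AsetInt, Set.mem_setOf_eq] at h'
      obtain ⟨a1, a2, a3⟩ := h'
      have e1 : -Λ < 2*Λ - q.2 := by linarith
      have e2 : 2*Λ - q.2 < Λ := by linarith
      have e3 : q.1 < Λ := by linarith
      have hqA : q ∈ Aset Λ := by
        simp only [Aset, Mstrip, Set.mem_setOf_eq]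
        exact ⟨⟨by linarith, by linarith⟩, a2, a3.le⟩
      obtain ⟨c1, c2⟩ := RS_rho_mem hφrange (-ε) a2 e3
      obtain ⟨d1, d2⟩ := RS_rho_mem hφrange (-ε) e1 e2
      have hlt := RS_rho_lt hφmono hφrange (-ε) (by linarith : q.1 < 2*Λ - q.2) a2 e2
      refine ⟨_, hflowA ε hεle m q hqA, Or.inr (Or.inr (Or.inl ⟨h, ?_⟩))⟩
      simp only [AsetInt, Set.mem_setOf_eq]
      try dsimp only
      refine ⟨by linarith, by linarith, by linarith⟩
    · -- bottom edge
      have h' := h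
      simp only [Set.mem_prod, Set.mem_Ioo, Set.mem_singleton_iff] at h'
      obtain ⟨⟨a1, a2⟩, a3⟩ := h'
      have hqS : q ∈ Sset Λ := by
        simp only [Sset, Set.mem_setOf_eq]
        exact ⟨a1, a2.le, le_of_eq a3.symm, by rw [a3]; linarith⟩
      obtain ⟨c1, c2⟩ := RS_rho_mem hφrange (-ε) a1 a2
      refine ⟨_, hflowS ε hεle m q hqS, Or.inr (Or.inr (Or.inr (Or.inl ⟨h, ?_⟩)))⟩
      simp only [Set.mem_prod, Set.mem_Ioo, Set.mem_singleton_iff]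
      try dsimp only
      exact ⟨⟨c1, c2⟩, by rw [a3, RS_rho_bot]⟩
    · -- top edge
      have h' := h
      simp only [Set.mem_prod, Set.mem_Ioo, Set.mem_singleton_iff] at h'
      obtain ⟨⟨a1, a2⟩, a3⟩ := h'
      have hqA : q ∈ Aset Λ := by
        simp only [Aset, Mstrip, Set.mem_setOf_eq]
        exact ⟨⟨by linarith, by linarith⟩, a1, le_of_eq a3.symm⟩
      obtain ⟨c1, c2⟩ := RS_rho_mem hφrange (-ε) a1 a2
      have e : 2*Λ - q.2 = Λ := by rw [a3]; ring
      refine ⟨_, hflowA ε hεle m q hqA, Or.inr (Or.inr (Or.inr (Or.inr (Or.inl ⟨h, ?_⟩))))⟩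
      simp only [Set.mem_prod, Set.mem_Ioo, Set.mem_singleton_iff]
      try dsimp only
      refine ⟨⟨c1, c2⟩, ?_⟩
      rw [e, RS_rho_top hΛ]; ring
    · -- left edge
      have h' := h
      simp only [Set.mem_prod, Set.mem_Ioo, Set.mem_singleton_iff] at h'
      obtain ⟨a1, a2, a3⟩ := h'
      have hqL : q ∈ Lset Λ := by
        simp only [Lset, Mstrip, Set.mem_setOf_eq]
        exact ⟨⟨by linarith, by linarith⟩, le_of_eq a1, a3⟩
      obtain ⟨c1, c2⟩ := RS_rho_mem hφrange ε a2 a3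
      have e : -(2*Λ) - q.1 = -Λ := by rw [a1]; ring
      refine ⟨_, hflowL ε hεle m q hqL,
        Or.inr (Or.inr (Or.inr (Or.inr (Or.inr (Or.inl ⟨h, ?_⟩)))))⟩
      simp only [Set.mem_prod, Set.mem_Ioo, Set.mem_singleton_iff]
      try dsimp only
      refine ⟨?_, c1, c2⟩
      rw [e, RS_rho_bot]; ring
    · -- right edge
      have h' := h
      simp only [Set.mem_prod, Set.mem_Ioo, Set.mem_singleton_iff] at h'
      obtain ⟨a1, a2, a3⟩ := h'
      have hqS : q ∈ Sset Λ := by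
        simp only [Sset, Set.mem_setOf_eq]
        exact ⟨by linarith, le_of_eq a1, a2.le, a3⟩
      obtain ⟨c1, c2⟩ := RS_rho_mem hφrange ε a2 a3
      refine ⟨_, hflowS ε hεle m q hqS,
        Or.inr (Or.inr (Or.inr (Or.inr (Or.inr (Or.inr (Or.inl ⟨h, ?_⟩))))))⟩
      simp only [Set.mem_prod, Set.mem_Ioo, Set.mem_singleton_iff]
      try dsimp only
      exact ⟨by rw [a1, RS_rho_top hΛ], c1, c2⟩
    · -- corner
      have h' := h
      simp only [Set.mem_singleton_iff, Prod.ext_iff] at h'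
      obtain ⟨a1, a2⟩ := h'
      have hqS : q ∈ Sset Λ := by
        simp only [Sset, Set.mem_setOf_eq]
        exact ⟨by linarith, le_of_eq a1, le_of_eq a2.symm, by rw [a2]; linarith⟩
      refine ⟨_, hflowS ε hεle m q hqS,
        Or.inr (Or.inr (Or.inr (Or.inr (Or.inr (Or.inr (Or.inr (Or.inl ⟨h, ?_⟩)))))))⟩
      simp only [Set.mem_singleton_iff, Prod.ext_iff]
      try dsimp only
      exact ⟨by rw [a1, RS_rho_top hΛ], by rw [a2, RS_rho_bot]⟩
    · -- P9a : corner (-Λ, -Λ)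
      obtain ⟨a1, a2⟩ := h
      have hqL : q ∈ Lset Λ := by
        simp only [Lset, Mstrip, Set.mem_setOf_eq]
        exact ⟨⟨by linarith, by linarith⟩, le_of_eq a1, by linarith⟩
      have e : -(2*Λ) - q.1 = -Λ := by rw [a1]; ring
      refine ⟨_, hflowL ε hεle m q hqL,
        Or.inr (Or.inr (Or.inr (Or.inr (Or.inr (Or.inr (Or.inr (Or.inr (Or.inl
          ⟨⟨a1, a2⟩, ?_, ?_⟩))))))))⟩
      · try dsimp only; rw [e, RS_rho_bot]; ring
      · try dsimp only; rw [a2, RS_rho_bot]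
    · -- P9b : lower boundary
      obtain ⟨a1, a2, a3⟩ := h
      have e : -(2*Λ) - q.1 = q.2 := by linarith
      have e3 : -Λ < q.2 := by linarith
      have hqL : q ∈ Lset Λ := by
        simp only [Lset, Mstrip, Set.mem_setOf_eq]
        exact ⟨⟨by linarith, by linarith⟩, a2.le, a3⟩
      obtain ⟨c1, c2⟩ := RS_rho_mem hφrange ε e3 a3
      refine ⟨_, hflowL ε hεle m q hqL,
        Or.inr (Or.inr (Or.inr (Or.inr (Or.inr (Or.inr (Or.inr (Or.inr (Or.inr (Or.inl
          ⟨⟨a1, a2, a3⟩, ?_, ?_, ?_⟩)))))))))⟩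
      · try dsimp only; rw [e]; ring
      · try dsimp only; rw [e]; linarith
      · try dsimp only; exact c2
    · -- P10a : corner (Λ, Λ)
      obtain ⟨a1, a2⟩ := h
      have hqA : q ∈ Aset Λ := by
        simp only [Aset, Mstrip, Set.mem_setOf_eq]
        exact ⟨⟨by linarith, by linarith⟩, by linarith, le_of_eq a2.symm⟩
      have e : 2*Λ - q.2 = Λ := by rw [a2]; ring
      refine ⟨_, hflowA ε hεle m q hqA,
        Or.inr (Or.inr (Or.inr (Or.inr (Or.inr (Or.inr (Or.inr (Or.inr (Or.inr (Or.inr (Or.inl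
          ⟨⟨a1, a2⟩, ?_, ?_⟩))))))))))⟩
      · try dsimp only; rw [a1, RS_rho_top hΛ]
      · try dsimp only; rw [e, RS_rho_top hΛ]; ring
    · -- P10b : upper boundary
      obtain ⟨a1, a2, a3⟩ := h
      have e : 2*Λ - q.2 = q.1 := by linarith
      have e2 : q.1 < Λ := by linarith
      have hqA : q ∈ Aset Λ := by
        simp only [Aset, Mstrip, Set.mem_setOf_eq]
        exact ⟨⟨by linarith, by linarith⟩, a2, by linarith⟩
      obtain ⟨c1, c2⟩ := RS_rho_mem hφrange (-ε) a2 e2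
      refine ⟨_, hflowA ε hεle m q hqA,
        Or.inr (Or.inr (Or.inr (Or.inr (Or.inr (Or.inr (Or.inr (Or.inr (Or.inr (Or.inr (Or.inr
          ⟨⟨a1, a2, a3⟩, ?_, ?_, ?_⟩))))))))))⟩
      · try dsimp only; rw [e]; ring
      · try dsimp only; exact c1
      · try dsimp only; rw [e]; linarith
  obtain ⟨q₂, hfw, hpp⟩ := key
  rw [hfw] at hvw
  rw [hfv] at hwv
  have hBp : RS_Bnd Λ p := RS_RB hΛ hR hpR
  have hBp₂ : RS_Bnd Λ p₂ := RS_RB hΛ hR hp₂R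
  obtain ⟨hBq, hBq₂⟩ := RS_PPB hΛ hpp
  have hkm : k = m :=
    le_antisymm (RS_level_le hΛ hBp hBq₂ hvw) (RS_level_le hΛ hBq hBp₂ hwv)
  subst hkm
  rw [RS_Mle_zpow] at hvw hwv
  rcases RS_core hΛ R hR hpR hp₂R hpp hvw hwv with hqR | ⟨hRLA, habs⟩
  · exact Or.inl ⟨q, hqR, rfl⟩
  · refine Or.inr ⟨hRLA, ?_⟩
    simp only [bdryM, Set.mem_setOf_eq]
    refine ⟨hw, ?_⟩
    rw [RS_sum_abs]
    convert habs using 2 <;> ring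

end
end

section
/- Fix Λ > 0, the strip M with partial order ⪯, the glide-reflection T, a strictly increasing bijection φ : ℝ → (−Λ, Λ), the flow (T_M)_ε on M, and the interleaving distance d on M, all as defined. Let v ∈ M ∖ ∂M and 0 < ε < ∞. Then there exists w ∈ ∂M such that d(v, w) < ε if and only if it is not the case that (T_M)_{2ε}(v) ⪯ T(v). -/
open scoped ENNReal

noncomputable section

section NB
set_option linter.unusedSectionVars false

variable {Λ : ℝ} {φ : ℝ → ℝ}

lemma Tapp (p : ℝ × ℝ) : Tmap Λ p = (-(2*Λ) - p.2, 2*Λ - p.1) := rfl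

lemma Tapp_inv (p : ℝ × ℝ) : (Tmap Λ)⁻¹ p = (2*Λ - p.2, -(2*Λ) - p.1) := rfl

lemma Tzpow_add (j k : ℤ) (p : ℝ × ℝ) :
    (Tmap Λ ^ (j + k)) p = (Tmap Λ ^ j) ((Tmap Λ ^ k) p) := by
  rw [zpow_add]; rfl

lemma Tzpow_even (m : ℤ) : ∀ p : ℝ × ℝ,
    (Tmap Λ ^ (2*m)) p = (p.1 - 4*Λ*m, p.2 + 4*Λ*m) := by
  induction m using Int.induction_on with
  | zero => intro p; norm_num
  | succ i ih =>
      intro p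
      have h : (2*((i:ℤ)+1)) = 2 + 2*i := by ring
      rw [h, Tzpow_add]
      have h2 : (Tmap Λ ^ (2:ℤ)) ((Tmap Λ ^ (2*(i:ℤ))) p)
          = Tmap Λ (Tmap Λ ((Tmap Λ ^ (2*(i:ℤ))) p)) := by
        rw [show (2:ℤ) = 1 + 1 from rfl, Tzpow_add, zpow_one]
      rw [h2, ih, Tapp, Tapp]
      simp only [Prod.mk.injEq]
      push_cast
      constructor <;> ring
  | pred i ih =>
      intro p
      have h : (2*(-(i:ℤ)-1)) = -2 + 2*(-i) := by ring
      rw [h, Tzpow_add]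
      have h2 : (Tmap Λ ^ (-2:ℤ)) ((Tmap Λ ^ (2*(-i:ℤ))) p)
          = (Tmap Λ)⁻¹ ((Tmap Λ)⁻¹ ((Tmap Λ ^ (2*(-i:ℤ))) p)) := by
        rw [show (-2:ℤ) = -1 + -1 from rfl, Tzpow_add, zpow_neg_one]
      rw [h2, ih, Tapp_inv, Tapp_inv]
      simp only [Prod.mk.injEq]
      push_cast
      constructor <;> ring

lemma Tzpow_odd (m : ℤ) (p : ℝ × ℝ) :
    (Tmap Λ ^ (2*m+1)) p = (-(2*Λ) - p.2 - 4*Λ*m, 2*Λ - p.1 + 4*Λ*m) := by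
  rw [Tzpow_add, zpow_one, Tapp, Tzpow_even]

lemma Mle_Tzpow (k : ℤ) (a b : ℝ × ℝ) :
    Mle ((Tmap Λ ^ k) a) ((Tmap Λ ^ k) b) ↔ Mle a b := by
  rcases Int.even_or_odd k with ⟨m, rfl⟩ | ⟨m, rfl⟩
  · rw [show (m + m : ℤ) = 2*m by ring, Tzpow_even, Tzpow_even]
    unfold Mle
    dsimp only
    constructor <;> rintro ⟨h1, h2⟩ <;> constructor <;> linarith
  · rw [Tzpow_odd, Tzpow_odd]
    unfold Mle
    dsimp only
    constructor <;> rintro ⟨h1, h2⟩ <;> constructor <;> linarith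


section rho
variable (hΛ : 0 < Λ) (hφmono : StrictMono φ) (hφrange : Set.range φ = Set.Ioo (-Λ) Λ)
include hΛ hφmono hφrange

lemma phi_mem (s : ℝ) : -Λ < φ s ∧ φ s < Λ := by
  have : φ s ∈ Set.range φ := Set.mem_range_self s
  rw [hφrange] at this
  exact ⟨this.1, this.2⟩

lemma phi_psi {t : ℝ} (h1 : -Λ < t) (h2 : t < Λ) : φ (Function.invFun φ t) = t := by
  have : t ∈ Set.range φ := by rw [hφrange]; exact ⟨h1, h2⟩
  exact Function.invFun_eq this

lemma psi_phi (s : ℝ) : Function.invFun φ (φ s) = s :=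
  Function.leftInverse_invFun hφmono.injective s

lemma rho_bot (s : ℝ) : rhoFlow Λ φ s (-Λ) = -Λ := by
  unfold rhoFlow; rw [if_pos le_rfl]

lemma rho_top (s : ℝ) : rhoFlow Λ φ s Λ = Λ := by
  unfold rhoFlow; rw [if_neg (by linarith), if_pos le_rfl]

lemma rho_int {t : ℝ} (h1 : -Λ < t) (h2 : t < Λ) (s : ℝ) :
    rhoFlow Λ φ s t = φ (s + Function.invFun φ t) := by
  unfold rhoFlow; rw [if_neg (by linarith), if_neg (by linarith)]

lemma rho_phi (s r : ℝ) : rhoFlow Λ φ s (φ r) = φ (s + r) := by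
  obtain ⟨h1, h2⟩ := phi_mem hΛ hφmono hφrange r
  rw [rho_int hΛ hφmono hφrange h1 h2, psi_phi hΛ hφmono hφrange]

lemma rho_mem (s t : ℝ) : -Λ ≤ rhoFlow Λ φ s t ∧ rhoFlow Λ φ s t ≤ Λ := by
  unfold rhoFlow
  split_ifs with h1 h2
  · constructor <;> linarith
  · constructor <;> linarith
  · obtain ⟨g1, g2⟩ := phi_mem hΛ hφmono hφrange (s + Function.invFun φ t)
    constructor <;> linarith

lemma rho_lt_top {t : ℝ} (ht : t < Λ) (s : ℝ) : rhoFlow Λ φ s t < Λ := by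
  unfold rhoFlow
  split_ifs with h1 h2
  · linarith
  · linarith
  · exact (phi_mem hΛ hφmono hφrange _).2

lemma rho_gt_bot {t : ℝ} (ht : -Λ < t) (s : ℝ) : -Λ < rhoFlow Λ φ s t := by
  unfold rhoFlow
  split_ifs with h1 h2
  · linarith
  · linarith
  · exact (phi_mem hΛ hφmono hφrange _).1

lemma rho_mono (s : ℝ) {t₁ t₂ : ℝ} (h1 : -Λ ≤ t₁) (h2 : t₂ ≤ Λ) (h : t₁ ≤ t₂) :
    rhoFlow Λ φ s t₁ ≤ rhoFlow Λ φ s t₂ := by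
  rcases eq_or_lt_of_le h1 with he | h1'
  · rw [← he, rho_bot hΛ hφmono hφrange]; exact (rho_mem hΛ hφmono hφrange s t₂).1
  rcases eq_or_lt_of_le h2 with he | h2'
  · rw [he, rho_top hΛ hφmono hφrange]; exact (rho_mem hΛ hφmono hφrange s t₁).2
  have e1 := rho_int hΛ hφmono hφrange h1' (lt_of_le_of_lt h h2') s
  have e2 := rho_int hΛ hφmono hφrange (lt_of_lt_of_le h1' h) h2' s
  rw [e1, e2]
  apply hφmono.monotone
  have : Function.invFun φ t₁ ≤ Function.invFun φ t₂ := by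
    by_contra hc
    push_neg at hc
    have := hφmono hc
    rw [phi_psi hΛ hφmono hφrange h1' (lt_of_le_of_lt h h2'),
        phi_psi hΛ hφmono hφrange (lt_of_lt_of_le h1' h) h2'] at this
    linarith
  linarith

lemma rho_rho {t : ℝ} (h1 : -Λ < t) (h2 : t < Λ) (s s' : ℝ) :
    rhoFlow Λ φ s (rhoFlow Λ φ s' t) = rhoFlow Λ φ (s + s') t := by
  rw [rho_int hΛ hφmono hφrange h1 h2 s', rho_phi hΛ hφmono hφrange,
    rho_int hΛ hφmono hφrange h1 h2, ← add_assoc]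

lemma rho_lt_rho {t : ℝ} (h1 : -Λ < t) (h2 : t < Λ) {s₁ s₂ : ℝ} (hs : s₁ < s₂) :
    rhoFlow Λ φ s₁ t < rhoFlow Λ φ s₂ t := by
  rw [rho_int hΛ hφmono hφrange h1 h2, rho_int hΛ hφmono hφrange h1 h2]
  exact hφmono (by linarith)

lemma self_le_rho {t : ℝ} (h1 : -Λ < t) (h2 : t < Λ) {s : ℝ} (hs : 0 ≤ s) :
    t ≤ rhoFlow Λ φ s t := by
  rw [rho_int hΛ hφmono hφrange h1 h2]
  have := hφmono.monotone (show Function.invFun φ t ≤ s + Function.invFun φ t by linarith)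
  rw [phi_psi hΛ hφmono hφrange h1 h2] at this
  exact this

end rho


/-- decomposability -/
def Dec (Λ : ℝ) (x : ℝ × ℝ) : Prop :=
  ∃ (k : ℤ) (p : ℝ × ℝ), (p ∈ Sset Λ ∨ p ∈ Lset Λ ∨ p ∈ Aset Λ) ∧ x = (Tmap Λ ^ k) p

set_option linter.unusedSectionVars false

section flows
variable (hΛ : 0 < Λ) (hφmono : StrictMono φ) (hφrange : Set.range φ = Set.Ioo (-Λ) Λ)
variable {flow : ℝ → ℝ × ℝ → ℝ × ℝ}
variable (hflowS : ∀ ε : ℝ, 0 ≤ ε → ∀ k : ℤ, ∀ p ∈ Sset Λ,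
      flow ε ((Tmap Λ ^ k) p) =
        (Tmap Λ ^ k) (rhoFlow Λ φ (-ε) p.1, rhoFlow Λ φ ε p.2))
    (hflowL : ∀ ε : ℝ, 0 ≤ ε → ∀ k : ℤ, ∀ p ∈ Lset Λ,
      flow ε ((Tmap Λ ^ k) p) =
        (Tmap Λ ^ k) (-(2 * Λ) - rhoFlow Λ φ ε (-(2 * Λ) - p.1), rhoFlow Λ φ ε p.2))
    (hflowA : ∀ ε : ℝ, 0 ≤ ε → ∀ k : ℤ, ∀ p ∈ Aset Λ,
      flow ε ((Tmap Λ ^ k) p) =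
        (Tmap Λ ^ k) (rhoFlow Λ φ (-ε) p.1, 2 * Λ - rhoFlow Λ φ (-ε) (2 * Λ - p.2)))
include hΛ hφmono hφrange hflowS hflowL hflowA

lemma flowS0 {δ : ℝ} (hδ : 0 ≤ δ) {p : ℝ × ℝ} (hp : p ∈ Sset Λ) :
    flow δ p = (rhoFlow Λ φ (-δ) p.1, rhoFlow Λ φ δ p.2) := by
  have := hflowS δ hδ 0 p hp
  simpa using this

lemma flowL0 {δ : ℝ} (hδ : 0 ≤ δ) {p : ℝ × ℝ} (hp : p ∈ Lset Λ) :
    flow δ p = (-(2 * Λ) - rhoFlow Λ φ δ (-(2 * Λ) - p.1), rhoFlow Λ φ δ p.2) := by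
  have := hflowL δ hδ 0 p hp
  simpa using this

lemma flowA0 {δ : ℝ} (hδ : 0 ≤ δ) {p : ℝ × ℝ} (hp : p ∈ Aset Λ) :
    flow δ p = (rhoFlow Λ φ (-δ) p.1, 2 * Λ - rhoFlow Λ φ (-δ) (2 * Λ - p.2)) := by
  have := hflowA δ hδ 0 p hp
  simpa using this

lemma memL {c : ℝ} (hc1 : -Λ ≤ c) (hc2 : c < Λ) : ((-(2*Λ) - c, c) : ℝ × ℝ) ∈ Lset Λ := by
  refine ⟨⟨by dsimp; linarith, by dsimp; linarith⟩, by dsimp; linarith, by dsimp; linarith⟩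

lemma memA {a : ℝ} (ha1 : -Λ < a) (ha2 : a ≤ Λ) : ((a, 2*Λ - a) : ℝ × ℝ) ∈ Aset Λ := by
  refine ⟨⟨by dsimp; linarith, by dsimp; linarith⟩, by dsimp; linarith, by dsimp; linarith⟩

lemma flow_wL_even {δ : ℝ} (hδ : 0 ≤ δ) (m : ℤ) {c : ℝ} (hc1 : -Λ ≤ c) (hc2 : c < Λ) :
    flow δ ((Tmap Λ ^ (2*m)) (-(2*Λ) - c, c)) =
      (-(2*Λ) - rhoFlow Λ φ δ c - 4*Λ*m, rhoFlow Λ φ δ c + 4*Λ*m) := by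
  have h := hflowL δ hδ (2*m) _ (memL hΛ hφmono hφrange hflowS hflowL hflowA hc1 hc2)
  rw [h]
  have harg : (-(2 * Λ) - ((-(2*Λ) - c, c) : ℝ × ℝ).1) = c := by dsimp; ring
  rw [harg, Tzpow_even]

lemma flow_wL_odd {δ : ℝ} (hδ : 0 ≤ δ) (m : ℤ) {c : ℝ} (hc1 : -Λ ≤ c) (hc2 : c < Λ) :
    flow δ ((Tmap Λ ^ (2*m+1)) (-(2*Λ) - c, c)) =
      (-(2*Λ) - rhoFlow Λ φ δ c - 4*Λ*m, 4*Λ + rhoFlow Λ φ δ c + 4*Λ*m) := by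
  have h := hflowL δ hδ (2*m+1) _ (memL hΛ hφmono hφrange hflowS hflowL hflowA hc1 hc2)
  rw [h]
  have harg : (-(2 * Λ) - ((-(2*Λ) - c, c) : ℝ × ℝ).1) = c := by dsimp; ring
  rw [harg, Tzpow_odd]
  all_goals (dsimp only; rw [Prod.mk.injEq]; constructor <;> ring)

lemma flow_wA_even {δ : ℝ} (hδ : 0 ≤ δ) (m : ℤ) {a : ℝ} (ha1 : -Λ < a) (ha2 : a ≤ Λ) :
    flow δ ((Tmap Λ ^ (2*m)) (a, 2*Λ - a)) =
      (rhoFlow Λ φ (-δ) a - 4*Λ*m, 2*Λ - rhoFlow Λ φ (-δ) a + 4*Λ*m) := by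
  have h := hflowA δ hδ (2*m) _ (memA hΛ hφmono hφrange hflowS hflowL hflowA ha1 ha2)
  rw [h]
  have harg : (2 * Λ - ((a, 2*Λ - a) : ℝ × ℝ).2) = a := by dsimp; ring
  rw [harg, Tzpow_even]
  all_goals (dsimp only; rw [Prod.mk.injEq]; constructor <;> ring)

lemma flow_wA_odd {δ : ℝ} (hδ : 0 ≤ δ) (m : ℤ) {a : ℝ} (ha1 : -Λ < a) (ha2 : a ≤ Λ) :
    flow δ ((Tmap Λ ^ (2*m+1)) (a, 2*Λ - a)) =
      (rhoFlow Λ φ (-δ) a - 4*Λ - 4*Λ*m, 2*Λ - rhoFlow Λ φ (-δ) a + 4*Λ*m) := by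
  have h := hflowA δ hδ (2*m+1) _ (memA hΛ hφmono hφrange hflowS hflowL hflowA ha1 ha2)
  rw [h]
  have harg : (2 * Λ - ((a, 2*Λ - a) : ℝ × ℝ).2) = a := by dsimp; ring
  rw [harg, Tzpow_odd]
  all_goals (dsimp only; rw [Prod.mk.injEq]; constructor <;> ring)

lemma flow_equiv {δ : ℝ} (hδ : 0 ≤ δ) {x : ℝ × ℝ} (hx : Dec Λ x) (m : ℤ) :
    flow δ ((Tmap Λ ^ m) x) = (Tmap Λ ^ m) (flow δ x) := by
  obtain ⟨k, p, hp, rfl⟩ := hx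
  rw [← Tzpow_add]
  rcases hp with h | h | h
  · rw [hflowS δ hδ (m+k) p h, hflowS δ hδ k p h, Tzpow_add]
  · rw [hflowL δ hδ (m+k) p h, hflowL δ hδ k p h, Tzpow_add]
  · rw [hflowA δ hδ (m+k) p h, hflowA δ hδ k p h, Tzpow_add]

lemma dInt_T (k : ℤ) {v w : ℝ × ℝ} (hv : Dec Λ v) (hw : Dec Λ w) :
    dInt flow ((Tmap Λ ^ k) v) ((Tmap Λ ^ k) w) = dInt flow v w := by
  unfold dInt
  congr 1
  ext e
  simp only [Set.mem_setOf_eq]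
  constructor
  · rintro ⟨δ, h1, rfl, h3, h4⟩
    rw [flow_equiv hΛ hφmono hφrange hflowS hflowL hflowA (le_of_lt h1) hw k] at h3
    rw [flow_equiv hΛ hφmono hφrange hflowS hflowL hflowA (le_of_lt h1) hv k] at h4
    exact ⟨δ, h1, rfl, (Mle_Tzpow k _ _).mp h3, (Mle_Tzpow k _ _).mp h4⟩
  · rintro ⟨δ, h1, rfl, h3, h4⟩
    refine ⟨δ, h1, rfl, ?_, ?_⟩
    · rw [flow_equiv hΛ hφmono hφrange hflowS hflowL hflowA (le_of_lt h1) hw k]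
      exact (Mle_Tzpow k _ _).mpr h3
    · rw [flow_equiv hΛ hφmono hφrange hflowS hflowL hflowA (le_of_lt h1) hv k]
      exact (Mle_Tzpow k _ _).mpr h4

end flows

lemma dInt_lt_iff {flow : ℝ → ℝ × ℝ → ℝ × ℝ} {v w : ℝ × ℝ} {ε : ℝ} (hε : 0 < ε) :
    dInt flow v w < ENNReal.ofReal ε ↔
      ∃ δ : ℝ, 0 < δ ∧ δ < ε ∧ Mle v (flow δ w) ∧ Mle w (flow δ v) := by
  unfold dInt
  rw [sInf_lt_iff]
  constructor
  · rintro ⟨e, ⟨δ, hδ, rfl, h3, h4⟩, hlt⟩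
    exact ⟨δ, hδ, (ENNReal.ofReal_lt_ofReal_iff hε).mp hlt, h3, h4⟩
  · rintro ⟨δ, h1, h2, h3, h4⟩
    exact ⟨ENNReal.ofReal δ, ⟨δ, h1, rfl, h3, h4⟩,
      (ENNReal.ofReal_lt_ofReal_iff hε).mpr h2⟩


section decomp
variable (hΛ : 0 < Λ)
include hΛ

lemma memL' {c : ℝ} (hc1 : -Λ ≤ c) (hc2 : c < Λ) : ((-(2*Λ) - c, c) : ℝ × ℝ) ∈ Lset Λ := by
  refine ⟨⟨by dsimp; linarith, by dsimp; linarith⟩, by dsimp; linarith, by dsimp; linarith⟩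

lemma memA' {a : ℝ} (ha1 : -Λ < a) (ha2 : a ≤ Λ) : ((a, 2*Λ - a) : ℝ × ℝ) ∈ Aset Λ := by
  refine ⟨⟨by dsimp; linarith, by dsimp; linarith⟩, by dsimp; linarith, by dsimp; linarith⟩

lemma bdry_decomp {w : ℝ × ℝ} (hw : w ∈ bdryM Λ) :
    ∃ m : ℤ,
      (∃ c : ℝ, -Λ ≤ c ∧ c < Λ ∧
        (w = (Tmap Λ ^ (2*m)) (-(2*Λ) - c, c) ∨ w = (Tmap Λ ^ (2*m+1)) (-(2*Λ) - c, c))) ∨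
      (∃ a : ℝ, -Λ < a ∧ a ≤ Λ ∧
        (w = (Tmap Λ ^ (2*m)) (a, 2*Λ - a) ∨ w = (Tmap Λ ^ (2*m+1)) (a, 2*Λ - a))) := by
  obtain ⟨hm, habs⟩ := hw
  have h4 : (0:ℝ) < 4*Λ := by linarith
  rcases abs_eq (by linarith : (0:ℝ) ≤ 2*Λ) |>.mp habs with hsum | hsum
  · -- upper boundary
    set a₀ := w.1 with ha₀
    set m := ⌊(Λ - a₀)/(4*Λ)⌋ with hm'
    have hA : (m:ℝ) * (4*Λ) ≤ Λ - a₀ := (le_div_iff₀ h4).mp (Int.floor_le _)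
    have hB : Λ - a₀ < ((m:ℝ) + 1) * (4*Λ) := by
      have := Int.lt_floor_add_one ((Λ - a₀)/(4*Λ))
      have := (div_lt_iff₀ h4).mp this
      linarith
    set a := a₀ + 4*Λ*m with ha
    have hw2 : w.2 = 2*Λ - a₀ := by linarith
    by_cases hcase : -Λ < a
    · refine ⟨m, Or.inr ⟨a, hcase, by nlinarith, Or.inl ?_⟩⟩
      rw [Tzpow_even, Prod.ext_iff]
      constructor <;> dsimp <;> linarith
    · push_neg at hcase
      refine ⟨m, Or.inl ⟨-(2*Λ) - a, by nlinarith, by linarith, Or.inr ?_⟩⟩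
      rw [Tzpow_odd, Prod.ext_iff]
      constructor <;> dsimp <;> linarith
  · -- lower boundary
    set c₀ := w.2 with hc₀
    set m := ⌊(c₀ + Λ)/(4*Λ)⌋ with hm'
    have hA : (m:ℝ) * (4*Λ) ≤ c₀ + Λ := (le_div_iff₀ h4).mp (Int.floor_le _)
    have hB : c₀ + Λ < ((m:ℝ) + 1) * (4*Λ) := by
      have := Int.lt_floor_add_one ((c₀ + Λ)/(4*Λ))
      have := (div_lt_iff₀ h4).mp this
      linarith
    set c := c₀ - 4*Λ*m with hc
    have hw1 : w.1 = -(2*Λ) - c₀ := by linarith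
    by_cases hcase : c < Λ
    · refine ⟨m, Or.inl ⟨c, by nlinarith, hcase, Or.inl ?_⟩⟩
      rw [Tzpow_even, Prod.ext_iff]
      constructor <;> dsimp <;> linarith
    · push_neg at hcase
      refine ⟨m, Or.inr ⟨2*Λ - c, by linarith, by nlinarith, Or.inr ?_⟩⟩
      rw [Tzpow_odd, Prod.ext_iff]
      constructor <;> dsimp <;> linarith

lemma int_decomp {v : ℝ × ℝ} (h1 : -(2*Λ) < v.1 + v.2) (h2 : v.1 + v.2 < 2*Λ) :
    ∃ (k : ℤ) (p : ℝ × ℝ), v = (Tmap Λ ^ k) p ∧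
      (p ∈ Sset Λ ∨ (p ∈ Lset Λ ∧ -(2*Λ) < p.1 + p.2) ∨
        (p ∈ Aset Λ ∧ p.1 + p.2 < 2*Λ)) := by
  have h4 : (0:ℝ) < 4*Λ := by linarith
  set m := ⌊(v.2 + Λ)/(4*Λ)⌋ with hm'
  have hA : (m:ℝ) * (4*Λ) ≤ v.2 + Λ := (le_div_iff₀ h4).mp (Int.floor_le _)
  have hB : v.2 + Λ < ((m:ℝ) + 1) * (4*Λ) := by
    have := Int.lt_floor_add_one ((v.2 + Λ)/(4*Λ))
    have := (div_lt_iff₀ h4).mp this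
    linarith
  set x' := v.1 + 4*Λ*m with hx'
  set y' := v.2 - 4*Λ*m with hy'
  have hv' : v = (Tmap Λ ^ (2*m)) (x', y') := by
    rw [Tzpow_even, Prod.ext_iff]
    constructor <;> dsimp <;> linarith
  by_cases hy : y' < Λ
  · by_cases hx1 : -Λ < x'
    · by_cases hx2 : x' ≤ Λ
      · exact ⟨2*m, (x', y'), hv', Or.inl ⟨hx1, hx2, by linarith, hy⟩⟩
      · push_neg at hx2
        refine ⟨2*(m-1)+1, (-(2*Λ) - y', 2*Λ - x'), ?_, Or.inr (Or.inl ⟨⟨⟨?_, ?_⟩, ?_, ?_⟩, ?_⟩)⟩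
        · rw [Tzpow_odd, Prod.ext_iff]
          constructor <;> dsimp <;> push_cast <;> linarith
        · dsimp; linarith
        · dsimp; linarith
        · dsimp; linarith
        · dsimp; linarith
        · dsimp; linarith
    · push_neg at hx1
      refine ⟨2*m, (x', y'), hv', Or.inr (Or.inl ⟨⟨⟨?_, ?_⟩, ?_, ?_⟩, ?_⟩)⟩
      · dsimp; linarith
      · dsimp; linarith
      · dsimp; linarith
      · dsimp; linarith
      · dsimp; linarith
  · push_neg at hy
    by_cases hx1 : -Λ < x'
    · refine ⟨2*m, (x', y'), hv', Or.inr (Or.inr ⟨⟨⟨?_, ?_⟩, ?_, ?_⟩, ?_⟩)⟩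
      · dsimp; linarith
      · dsimp; linarith
      · dsimp; linarith
      · dsimp; linarith
      · dsimp; linarith
    · push_neg at hx1
      have hveq : v = (Tmap Λ ^ (2*m+1)) (2*Λ - y', -(2*Λ) - x') := by
        rw [Tzpow_odd, Prod.ext_iff]
        constructor <;> dsimp <;> linarith
      by_cases hp2 : -(2*Λ) - x' < Λ
      · exact ⟨2*m+1, _, hveq, Or.inl ⟨by dsimp; linarith, by dsimp; linarith,
          by dsimp; linarith, by dsimp; linarith⟩⟩
      · push_neg at hp2
        refine ⟨2*m+1, _, hveq, Or.inr (Or.inr ⟨⟨⟨?_, ?_⟩, ?_, ?_⟩, ?_⟩)⟩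
        · dsimp; linarith
        · dsimp; linarith
        · dsimp; linarith
        · dsimp; linarith
        · dsimp; linarith

lemma Dec_of_bdry {w : ℝ × ℝ} (hw : w ∈ bdryM Λ) : Dec Λ w := by
  obtain ⟨m, hcase⟩ := bdry_decomp hΛ hw
  rcases hcase with ⟨c, hc1, hc2, heq | heq⟩ | ⟨a, ha1, ha2, heq | heq⟩
  · exact ⟨2*m, _, Or.inr (Or.inl (memL' hΛ hc1 hc2)), heq⟩
  · exact ⟨2*m+1, _, Or.inr (Or.inl (memL' hΛ hc1 hc2)), heq⟩
  · exact ⟨2*m, _, Or.inr (Or.inr (memA' hΛ ha1 ha2)), heq⟩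
  · exact ⟨2*m+1, _, Or.inr (Or.inr (memA' hΛ ha1 ha2)), heq⟩

lemma Dec_of_int {v : ℝ × ℝ} (h1 : -(2*Λ) < v.1 + v.2) (h2 : v.1 + v.2 < 2*Λ) :
    Dec Λ v := by
  obtain ⟨k, p, heq, hp⟩ := int_decomp hΛ h1 h2
  rcases hp with h | ⟨h, _⟩ | ⟨h, _⟩
  · exact ⟨k, p, Or.inl h, heq⟩
  · exact ⟨k, p, Or.inr (Or.inl h), heq⟩
  · exact ⟨k, p, Or.inr (Or.inr h), heq⟩

end decomp

lemma bdry_zpow (k : ℤ) {q : ℝ × ℝ} (h : q ∈ bdryM Λ) : (Tmap Λ ^ k) q ∈ bdryM Λ := by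
  obtain ⟨⟨hm1, hm2⟩, habs⟩ := h
  rcases Int.even_or_odd k with ⟨m, rfl⟩ | ⟨m, rfl⟩
  · rw [show (m + m : ℤ) = 2*m by ring, Tzpow_even]
    refine ⟨⟨by dsimp; linarith, by dsimp; linarith⟩, ?_⟩
    dsimp
    rw [show q.1 - 4*Λ*m + (q.2 + 4*Λ*m) = q.1 + q.2 by ring]
    exact habs
  · rw [Tzpow_odd]
    refine ⟨⟨by dsimp; linarith, by dsimp; linarith⟩, ?_⟩
    dsimp
    rw [show -(2*Λ) - q.2 - 4*Λ*m + (2*Λ - q.1 + 4*Λ*m) = -(q.1 + q.2) by ring, abs_neg]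
    exact habs


lemma Mle_def {p q : ℝ × ℝ} : Mle p q ↔ (q.1 ≤ p.1 ∧ p.2 ≤ q.2) := Iff.rfl

section cases
variable (hΛ : 0 < Λ) (hφmono : StrictMono φ) (hφrange : Set.range φ = Set.Ioo (-Λ) Λ)
variable {flow : ℝ → ℝ × ℝ → ℝ × ℝ}
variable (hflowS : ∀ ε : ℝ, 0 ≤ ε → ∀ k : ℤ, ∀ p ∈ Sset Λ,
      flow ε ((Tmap Λ ^ k) p) =
        (Tmap Λ ^ k) (rhoFlow Λ φ (-ε) p.1, rhoFlow Λ φ ε p.2))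
    (hflowL : ∀ ε : ℝ, 0 ≤ ε → ∀ k : ℤ, ∀ p ∈ Lset Λ,
      flow ε ((Tmap Λ ^ k) p) =
        (Tmap Λ ^ k) (-(2 * Λ) - rhoFlow Λ φ ε (-(2 * Λ) - p.1), rhoFlow Λ φ ε p.2))
    (hflowA : ∀ ε : ℝ, 0 ≤ ε → ∀ k : ℤ, ∀ p ∈ Aset Λ,
      flow ε ((Tmap Λ ^ k) p) =
        (Tmap Λ ^ k) (rhoFlow Λ φ (-ε) p.1, 2 * Λ - rhoFlow Λ φ (-ε) (2 * Λ - p.2)))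
include hΛ hφmono hφrange hflowS hflowL hflowA

lemma caseS {p : ℝ × ℝ} (hp : p ∈ Sset Λ) {ε : ℝ} (hε : 0 < ε) :
    (∃ w ∈ bdryM Λ, dInt flow p w < ENNReal.ofReal ε) ↔
      ¬ Mle (flow (2*ε) p) (Tmap Λ p) := by
  obtain ⟨hp1, hp2, hp3, hp4⟩ := hp
  have hpS : p ∈ Sset Λ := ⟨hp1, hp2, hp3, hp4⟩
  have hMle : Mle (flow (2*ε) p) (Tmap Λ p) := by
    rw [flowS0 hΛ hφmono hφrange hflowS hflowL hflowA (by linarith) hpS, Tapp, Mle_def]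
    constructor
    · have := (rho_mem hΛ hφmono hφrange (-(2*ε)) p.1).1
      dsimp
      linarith
    · have := (rho_mem hΛ hφmono hφrange (2*ε) p.2).2
      dsimp
      linarith
  simp only [hMle, not_true, iff_false]
  rintro ⟨w, hw, hlt⟩
  obtain ⟨δ, hδ0, hδε, h1, h2⟩ := (dInt_lt_iff hε).mp hlt
  rw [flowS0 hΛ hφmono hφrange hflowS hflowL hflowA (le_of_lt hδ0) hpS] at h2
  have F3 : -Λ < rhoFlow Λ φ (-δ) p.1 := rho_gt_bot hΛ hφmono hφrange hp1 _
  have F4 : rhoFlow Λ φ δ p.2 < Λ := rho_lt_top hΛ hφmono hφrange hp4 _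
  obtain ⟨m, ⟨c, hc1, hc2, heq | heq⟩ | ⟨a, ha1, ha2, heq | heq⟩⟩ := bdry_decomp hΛ hw <;>
    subst heq
  · -- w lower, even
    rw [flow_wL_even hΛ hφmono hφrange hflowS hflowL hflowA (le_of_lt hδ0) m hc1 hc2] at h1
    rw [Tzpow_even] at h2
    obtain ⟨h11, h12⟩ := h1
    obtain ⟨h21, h22⟩ := h2
    dsimp only at h11 h12 h21 h22
    have hF : -Λ ≤ rhoFlow Λ φ δ c ∧ rhoFlow Λ φ δ c ≤ Λ := rho_mem hΛ hφmono hφrange δ c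
    have hm0 : m < 0 := by
      by_contra hcon
      push_neg at hcon
      have hc' : (0:ℝ) ≤ (m:ℝ) := by exact_mod_cast hcon
      nlinarith
    have hm1 : (m:ℝ) ≤ -1 := by
      have h' : m ≤ -1 := by omega
      exact_mod_cast h'
    have hprod : Λ * (m:ℝ) ≤ Λ * (-1) := mul_le_mul_of_nonneg_left hm1 (le_of_lt hΛ)
    linarith [h12, hF.2, hp3, hprod]
  · -- w lower ... odd
    rw [flow_wL_odd hΛ hφmono hφrange hflowS hflowL hflowA (le_of_lt hδ0) m hc1 hc2] at h1
    rw [Tzpow_odd] at h2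
    obtain ⟨h11, h12⟩ := h1
    obtain ⟨h21, h22⟩ := h2
    dsimp only at h11 h12 h21 h22
    have hF : -Λ ≤ rhoFlow Λ φ δ c ∧ rhoFlow Λ φ δ c ≤ Λ := rho_mem hΛ hφmono hφrange δ c
    have hF2 : rhoFlow Λ φ δ c < Λ := rho_lt_top hΛ hφmono hφrange hc2 _
    have hm0 : m < 0 := by
      by_contra hcon
      push_neg at hcon
      have hc' : (0:ℝ) ≤ (m:ℝ) := by exact_mod_cast hcon
      nlinarith
    have hm1 : (m:ℝ) ≤ -1 := by
      have h' : m ≤ -1 := by omega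
      exact_mod_cast h'
    have hprod : Λ * (m:ℝ) ≤ Λ * (-1) := mul_le_mul_of_nonneg_left hm1 (le_of_lt hΛ)
    linarith [h11, hF2, hp2, hprod]
  · -- w upper, even
    rw [flow_wA_even hΛ hφmono hφrange hflowS hflowL hflowA (le_of_lt hδ0) m ha1 ha2] at h1
    rw [Tzpow_even] at h2
    obtain ⟨h11, h12⟩ := h1
    obtain ⟨h21, h22⟩ := h2
    dsimp only at h11 h12 h21 h22
    have hF : -Λ ≤ rhoFlow Λ φ (-δ) a ∧ rhoFlow Λ φ (-δ) a ≤ Λ := rho_mem hΛ hφmono hφrange _ a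
    have hm0 : m < 0 := by
      by_contra hcon
      push_neg at hcon
      have hc' : (0:ℝ) ≤ (m:ℝ) := by exact_mod_cast hcon
      nlinarith
    have hm1 : (m:ℝ) ≤ -1 := by
      have h' : m ≤ -1 := by omega
      exact_mod_cast h'
    have hprod : Λ * (m:ℝ) ≤ Λ * (-1) := mul_le_mul_of_nonneg_left hm1 (le_of_lt hΛ)
    linarith [h11, hF.1, hp2, hprod]
  · -- w upper, odd
    rw [flow_wA_odd hΛ hφmono hφrange hflowS hflowL hflowA (le_of_lt hδ0) m ha1 ha2] at h1
    rw [Tzpow_odd] at h2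
    obtain ⟨h11, h12⟩ := h1
    obtain ⟨h21, h22⟩ := h2
    dsimp only at h11 h12 h21 h22
    have hF : -Λ < rhoFlow Λ φ (-δ) a := rho_gt_bot hΛ hφmono hφrange ha1 _
    have hm0 : m < 0 := by
      by_contra hcon
      push_neg at hcon
      have hc' : (0:ℝ) ≤ (m:ℝ) := by exact_mod_cast hcon
      nlinarith
    have hm1 : (m:ℝ) ≤ -1 := by
      have h' : m ≤ -1 := by omega
      exact_mod_cast h'
    have hprod : Λ * (m:ℝ) ≤ Λ * (-1) := mul_le_mul_of_nonneg_left hm1 (le_of_lt hΛ)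
    linarith [h12, hF, hp3, hprod]

lemma caseL {p : ℝ × ℝ} (hp : p ∈ Lset Λ) (hint : -(2*Λ) < p.1 + p.2) {ε : ℝ} (hε : 0 < ε) :
    (∃ w ∈ bdryM Λ, dInt flow p w < ENNReal.ofReal ε) ↔
      ¬ Mle (flow (2*ε) p) (Tmap Λ p) := by
  obtain ⟨x, y⟩ := p
  obtain ⟨⟨hs1, hs2⟩, hL1, hL2⟩ := hp
  dsimp only at hs1 hs2 hL1 hL2 hint
  have hpL : ((x, y) : ℝ × ℝ) ∈ Lset Λ := ⟨⟨hs1, hs2⟩, hL1, hL2⟩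
  have hy01 : -Λ ≤ -(2*Λ) - x := by linarith
  have hyy0 : -(2*Λ) - x < y := by linarith
  have hy02 : -(2*Λ) - x < Λ := by linarith
  have hy1 : -Λ < y := by linarith
  have hflow2 : flow (2*ε) ((x, y) : ℝ × ℝ)
      = (-(2 * Λ) - rhoFlow Λ φ (2*ε) (-(2 * Λ) - x), rhoFlow Λ φ (2*ε) y) := by
    have h := flowL0 hΛ hφmono hφrange hflowS hflowL hflowA (by linarith : (0:ℝ) ≤ 2*ε) hpL
    rw [h]
  have hRHS : (¬ Mle (flow (2*ε) ((x, y) : ℝ × ℝ)) (Tmap Λ ((x, y) : ℝ × ℝ)))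
      ↔ y < rhoFlow Λ φ (2*ε) (-(2*Λ) - x) := by
    rw [hflow2, Tapp, Mle_def]
    dsimp only
    constructor
    · intro h
      by_contra hcon
      push_neg at hcon
      refine h ⟨by linarith, ?_⟩
      have := (rho_mem hΛ hφmono hφrange (2*ε) y).2
      linarith
    · intro h hMle
      obtain ⟨g1, g2⟩ := hMle
      have : rhoFlow Λ φ (2*ε) (-(2 * Λ) - x) ≤ y := by linarith
      linarith
  rw [hRHS]
  constructor
  · -- from nearby boundary point to flow condition
    rintro ⟨w, hw, hlt⟩
    by_contra hcon
    push_neg at hcon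
    obtain ⟨δ, hδ0, hδε, h1, h2⟩ := (dInt_lt_iff hε).mp hlt
    rw [flowL0 hΛ hφmono hφrange hflowS hflowL hflowA (le_of_lt hδ0) hpL] at h2
    have Fy : rhoFlow Λ φ δ y < Λ := rho_lt_top hΛ hφmono hφrange hL2 _
    have Fy0m : -Λ ≤ rhoFlow Λ φ δ (-(2 * Λ) - x) ∧ rhoFlow Λ φ δ (-(2 * Λ) - x) ≤ Λ :=
      rho_mem hΛ hφmono hφrange _ _
    obtain ⟨m, ⟨c, hc1, hc2, heq | heq⟩ | ⟨a, ha1, ha2, heq | heq⟩⟩ := bdry_decomp hΛ hw <;>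
      subst heq
    · -- w lower, even : the genuine case
      rw [flow_wL_even hΛ hφmono hφrange hflowS hflowL hflowA (le_of_lt hδ0) m hc1 hc2] at h1
      rw [Tzpow_even] at h2
      obtain ⟨h11, h12⟩ := h1
      obtain ⟨h21, h22⟩ := h2
      dsimp only at h11 h12 h21 h22
      have Fc : -Λ ≤ rhoFlow Λ φ δ c ∧ rhoFlow Λ φ δ c ≤ Λ := rho_mem hΛ hφmono hφrange δ c
      have hmle : m ≤ 0 := by
        by_contra hcon2
        push_neg at hcon2
        have h' : (1:ℝ) ≤ (m:ℝ) := by exact_mod_cast hcon2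
        have hprod : Λ * (1:ℝ) ≤ Λ * (m:ℝ) := mul_le_mul_of_nonneg_left h' (le_of_lt hΛ)
        linarith [Fy0m.2, h21]
      have hmge : 0 ≤ m := by
        by_contra hcon2
        push_neg at hcon2
        have h' : (m:ℝ) ≤ -1 := by
          have h'' : m ≤ -1 := by omega
          exact_mod_cast h''
        have hprod : Λ * (m:ℝ) ≤ Λ * (-1:ℝ) := mul_le_mul_of_nonneg_left h' (le_of_lt hΛ)
        linarith [Fc.2, h12]
      have hm0 : m = 0 := le_antisymm hmle hmge
      subst hm0
      have hzero : 4*Λ*((0:ℤ):ℝ) = 0 := by norm_num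
      have hc_le : c ≤ rhoFlow Λ φ δ (-(2 * Λ) - x) := by linarith
      have hy_le : y ≤ rhoFlow Λ φ δ c := by linarith
      rcases eq_or_lt_of_le hy01 with he | hy01'
      · -- x = -Λ corner : boundary fixed point
        rw [← he, rho_bot hΛ hφmono hφrange] at hc_le
        have hceq : c = -Λ := le_antisymm hc_le hc1
        rw [hceq, rho_bot hΛ hφmono hφrange] at hy_le
        linarith
      · have hr1 : rhoFlow Λ φ δ c ≤ rhoFlow Λ φ δ (rhoFlow Λ φ δ (-(2 * Λ) - x)) :=
          rho_mono hΛ hφmono hφrange δ hc1 Fy0m.2 hc_le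
        have hr2 : rhoFlow Λ φ δ (rhoFlow Λ φ δ (-(2 * Λ) - x))
            = rhoFlow Λ φ (δ + δ) (-(2 * Λ) - x) :=
          rho_rho hΛ hφmono hφrange hy01' hy02 δ δ
        have hr3 : rhoFlow Λ φ (δ + δ) (-(2 * Λ) - x) < rhoFlow Λ φ (2*ε) (-(2 * Λ) - x) :=
          rho_lt_rho hΛ hφmono hφrange hy01' hy02 (by linarith)
        linarith
    · -- w lower, odd
      rw [flow_wL_odd hΛ hφmono hφrange hflowS hflowL hflowA (le_of_lt hδ0) m hc1 hc2] at h1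
      rw [Tzpow_odd] at h2
      obtain ⟨h11, h12⟩ := h1
      obtain ⟨h21, h22⟩ := h2
      dsimp only at h11 h12 h21 h22
      have Fc : rhoFlow Λ φ δ c < Λ := rho_lt_top hΛ hφmono hφrange hc2 _
      have hmle : (m:ℝ) ≤ -1 := by
        have hm0 : m < 0 := by
          by_contra hcon2
          push_neg at hcon2
          have h' : (0:ℝ) ≤ (m:ℝ) := by exact_mod_cast hcon2
          nlinarith [h22, Fy, hc1]
        have h'' : m ≤ -1 := by omega
        exact_mod_cast h''
      have hprod : Λ * (m:ℝ) ≤ Λ * (-1:ℝ) := mul_le_mul_of_nonneg_left hmle (le_of_lt hΛ)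
      linarith [h11, Fc]
    · -- w upper, even
      rw [flow_wA_even hΛ hφmono hφrange hflowS hflowL hflowA (le_of_lt hδ0) m ha1 ha2] at h1
      rw [Tzpow_even] at h2
      obtain ⟨h11, h12⟩ := h1
      obtain ⟨h21, h22⟩ := h2
      dsimp only at h11 h12 h21 h22
      have Fa : -Λ ≤ rhoFlow Λ φ (-δ) a ∧ rhoFlow Λ φ (-δ) a ≤ Λ := rho_mem hΛ hφmono hφrange _ a
      have hmle : (m:ℝ) ≤ -1 := by
        have hm0 : m < 0 := by
          by_contra hcon2
          push_neg at hcon2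
          have h' : (0:ℝ) ≤ (m:ℝ) := by exact_mod_cast hcon2
          nlinarith [h22, Fy, ha2]
        have h'' : m ≤ -1 := by omega
        exact_mod_cast h''
      have hprod : Λ * (m:ℝ) ≤ Λ * (-1:ℝ) := mul_le_mul_of_nonneg_left hmle (le_of_lt hΛ)
      linarith [h11, Fa.1]
    · -- w upper, odd
      rw [flow_wA_odd hΛ hφmono hφrange hflowS hflowL hflowA (le_of_lt hδ0) m ha1 ha2] at h1
      rw [Tzpow_odd] at h2
      obtain ⟨h11, h12⟩ := h1
      obtain ⟨h21, h22⟩ := h2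
      dsimp only at h11 h12 h21 h22
      have Fa : -Λ < rhoFlow Λ φ (-δ) a := rho_gt_bot hΛ hφmono hφrange ha1 _
      have hmle : m ≤ 0 := by
        by_contra hcon2
        push_neg at hcon2
        have h' : (1:ℝ) ≤ (m:ℝ) := by exact_mod_cast hcon2
        have hprod : Λ * (1:ℝ) ≤ Λ * (m:ℝ) := mul_le_mul_of_nonneg_left h' (le_of_lt hΛ)
        linarith [h21, Fy0m.2, ha2]
      have hmge : 0 ≤ m := by
        by_contra hcon2
        push_neg at hcon2
        have h' : (m:ℝ) ≤ -1 := by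
          have h'' : m ≤ -1 := by omega
          exact_mod_cast h''
        have hprod : Λ * (m:ℝ) ≤ Λ * (-1:ℝ) := mul_le_mul_of_nonneg_left h' (le_of_lt hΛ)
        linarith [h12, Fa]
      have hm0 : m = 0 := le_antisymm hmle hmge
      subst hm0
      have hzero : 4*Λ*((0:ℤ):ℝ) = 0 := by norm_num
      linarith [h22, Fy, ha2]
  · -- construct a nearby boundary point
    intro hC
    have hy01' : -Λ < -(2*Λ) - x := by
      rcases eq_or_lt_of_le hy01 with he | h
      · rw [← he, rho_bot hΛ hφmono hφrange] at hC
        linarith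
      · exact h
    set A := Function.invFun φ (-(2*Λ) - x) with hAdef
    set B := Function.invFun φ y with hBdef
    have hy0φ : φ A = -(2*Λ) - x := phi_psi hΛ hφmono hφrange hy01' hy02
    have hyφ : φ B = y := phi_psi hΛ hφmono hφrange hy1 hL2
    have hAB : A < B := by
      have := hyy0
      rw [← hy0φ, ← hyφ] at this
      exact hφmono.lt_iff_lt.mp this
    have hB2 : B < 2*ε + A := by
      rw [rho_int hΛ hφmono hφrange hy01' hy02, ← hAdef] at hC
      have : φ B < φ (2*ε + A) := by rw [hyφ]; exact hC
      exact hφmono.lt_iff_lt.mp this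
    have hδ0 : 0 < (B - A)/2 := by linarith
    have hδε : (B - A)/2 < ε := by linarith
    have hc1 : -Λ < φ (A + (B - A)/2) := (phi_mem hΛ hφmono hφrange _).1
    have hc2 : φ (A + (B - A)/2) < Λ := (phi_mem hΛ hφmono hφrange _).2
    refine ⟨(-(2*Λ) - φ (A + (B - A)/2), φ (A + (B - A)/2)), ?_, ?_⟩
    · refine ⟨⟨by dsimp; linarith, by dsimp; linarith⟩, ?_⟩
      dsimp only
      rw [show -(2*Λ) - φ (A + (B - A)/2) + φ (A + (B - A)/2) = -(2*Λ) by ring,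
        abs_neg, abs_of_nonneg (by linarith : (0:ℝ) ≤ 2*Λ)]
    · rw [dInt_lt_iff hε]
      refine ⟨(B - A)/2, hδ0, hδε, ?_, ?_⟩
      · -- Mle p (flow δ w)
        have hfw : flow ((B - A)/2) ((-(2*Λ) - φ (A + (B - A)/2), φ (A + (B - A)/2)) : ℝ × ℝ)
            = (-(2 * Λ) - rhoFlow Λ φ ((B - A)/2) (φ (A + (B - A)/2)),
               rhoFlow Λ φ ((B - A)/2) (φ (A + (B - A)/2))) := by
          rw [flowL0 hΛ hφmono hφrange hflowS hflowL hflowA (le_of_lt hδ0)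
            (memL' hΛ (le_of_lt hc1) hc2)]
          have harg : -(2 * Λ) - ((-(2*Λ) - φ (A + (B - A)/2), φ (A + (B - A)/2)) : ℝ × ℝ).1
              = φ (A + (B - A)/2) := by dsimp; ring
          rw [harg]
        have hrc : rhoFlow Λ φ ((B - A)/2) (φ (A + (B - A)/2)) = y := by
          rw [rho_phi hΛ hφmono hφrange, show (B - A)/2 + (A + (B - A)/2) = B by ring, hyφ]
        rw [hfw, hrc, Mle_def]
        constructor
        · dsimp only; linarith
        · dsimp only; linarith
      · -- Mle w (flow δ p)
        rw [flowL0 hΛ hφmono hφrange hflowS hflowL hflowA (le_of_lt hδ0) hpL, Mle_def]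
        have hr0 : rhoFlow Λ φ ((B - A)/2) (-(2 * Λ) - ((x, y) : ℝ × ℝ).1)
            = φ ((B - A)/2 + A) := by
          have : (-(2 * Λ) - ((x, y) : ℝ × ℝ).1) = -(2*Λ) - x := by dsimp
          rw [this, rho_int hΛ hφmono hφrange hy01' hy02, ← hAdef]
        have hry : rhoFlow Λ φ ((B - A)/2) (((x, y) : ℝ × ℝ).2) = φ ((B - A)/2 + B) := by
          have : (((x, y) : ℝ × ℝ).2) = y := by dsimp
          rw [this, rho_int hΛ hφmono hφrange hy1 hL2, ← hBdef]
        constructor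
        · dsimp only
          rw [hr0]
          have : φ ((B - A)/2 + A) = φ (A + (B - A)/2) := by rw [add_comm]
          rw [this]
        · dsimp only
          rw [hry]
          have : A + (B - A)/2 ≤ (B - A)/2 + B := by linarith
          exact hφmono.monotone this


lemma caseA {p : ℝ × ℝ} (hp : p ∈ Aset Λ) (hint : p.1 + p.2 < 2*Λ) {ε : ℝ} (hε : 0 < ε) :
    (∃ w ∈ bdryM Λ, dInt flow p w < ENNReal.ofReal ε) ↔
      ¬ Mle (flow (2*ε) p) (Tmap Λ p) := by
  obtain ⟨x, y⟩ := p
  obtain ⟨⟨hs1, hs2⟩, hA1, hA2⟩ := hp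
  dsimp only at hs1 hs2 hA1 hA2 hint
  have hpA : ((x, y) : ℝ × ℝ) ∈ Aset Λ := ⟨⟨hs1, hs2⟩, hA1, hA2⟩
  have hx02 : 2*Λ - y ≤ Λ := by linarith
  have hxx0 : x < 2*Λ - y := by linarith
  have hx01 : -Λ < 2*Λ - y := by linarith
  have hx1 : x < Λ := by linarith
  have hflow2 : flow (2*ε) ((x, y) : ℝ × ℝ)
      = (rhoFlow Λ φ (-(2*ε)) x, 2 * Λ - rhoFlow Λ φ (-(2*ε)) (2 * Λ - y)) := by
    have h := flowA0 hΛ hφmono hφrange hflowS hflowL hflowA (by linarith : (0:ℝ) ≤ 2*ε) hpA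
    rw [h]
  have hRHS : (¬ Mle (flow (2*ε) ((x, y) : ℝ × ℝ)) (Tmap Λ ((x, y) : ℝ × ℝ)))
      ↔ rhoFlow Λ φ (-(2*ε)) (2*Λ - y) < x := by
    rw [hflow2, Tapp, Mle_def]
    dsimp only
    constructor
    · intro h
      by_contra hcon
      push_neg at hcon
      refine h ⟨?_, by linarith⟩
      have := (rho_mem hΛ hφmono hφrange (-(2*ε)) x).1
      linarith
    · intro h hMle
      obtain ⟨g1, g2⟩ := hMle
      linarith
  rw [hRHS]
  constructor
  · -- from nearby boundary point to flow condition
    rintro ⟨w, hw, hlt⟩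
    by_contra hcon
    push_neg at hcon
    obtain ⟨δ, hδ0, hδε, h1, h2⟩ := (dInt_lt_iff hε).mp hlt
    rw [flowA0 hΛ hφmono hφrange hflowS hflowL hflowA (le_of_lt hδ0) hpA] at h2
    have Fx : -Λ < rhoFlow Λ φ (-δ) x := rho_gt_bot hΛ hφmono hφrange hA1 _
    have Fx0 : -Λ < rhoFlow Λ φ (-δ) (2 * Λ - y) := rho_gt_bot hΛ hφmono hφrange hx01 _
    have Fx0m : -Λ ≤ rhoFlow Λ φ (-δ) (2 * Λ - y) ∧ rhoFlow Λ φ (-δ) (2 * Λ - y) ≤ Λ :=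
      rho_mem hΛ hφmono hφrange _ _
    obtain ⟨m, ⟨c, hc1, hc2, heq | heq⟩ | ⟨a, ha1, ha2, heq | heq⟩⟩ := bdry_decomp hΛ hw <;>
      subst heq
    · -- w lower, even
      rw [flow_wL_even hΛ hφmono hφrange hflowS hflowL hflowA (le_of_lt hδ0) m hc1 hc2] at h1
      rw [Tzpow_even] at h2
      obtain ⟨h11, h12⟩ := h1
      obtain ⟨h21, h22⟩ := h2
      dsimp only at h11 h12 h21 h22
      have Fc : rhoFlow Λ φ δ c < Λ := rho_lt_top hΛ hφmono hφrange hc2 _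
      have hmge : (1:ℝ) ≤ (m:ℝ) := by
        have hm0 : 0 < m := by
          by_contra hcon2
          push_neg at hcon2
          have h' : (m:ℝ) ≤ 0 := by exact_mod_cast hcon2
          nlinarith [h12, Fc, hA2]
        have h'' : 1 ≤ m := by omega
        exact_mod_cast h''
      have hprod : Λ * (1:ℝ) ≤ Λ * (m:ℝ) := mul_le_mul_of_nonneg_left hmge (le_of_lt hΛ)
      linarith [h21, Fx, hc1]
    · -- w lower, odd
      rw [flow_wL_odd hΛ hφmono hφrange hflowS hflowL hflowA (le_of_lt hδ0) m hc1 hc2] at h1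
      rw [Tzpow_odd] at h2
      obtain ⟨h11, h12⟩ := h1
      obtain ⟨h21, h22⟩ := h2
      dsimp only at h11 h12 h21 h22
      have Fc : -Λ ≤ rhoFlow Λ φ δ c ∧ rhoFlow Λ φ δ c ≤ Λ := rho_mem hΛ hφmono hφrange δ c
      have hmle : (m:ℝ) ≤ -1 := by
        have hm0 : m < 0 := by
          by_contra hcon2
          push_neg at hcon2
          have h' : (0:ℝ) ≤ (m:ℝ) := by exact_mod_cast hcon2
          nlinarith [h21, Fx, hc1]
        have h'' : m ≤ -1 := by omega
        exact_mod_cast h''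
      have hprod : Λ * (m:ℝ) ≤ Λ * (-1:ℝ) := mul_le_mul_of_nonneg_left hmle (le_of_lt hΛ)
      linarith [h11, Fc.2, hx1]
    · -- w upper, even : the genuine case
      rw [flow_wA_even hΛ hφmono hφrange hflowS hflowL hflowA (le_of_lt hδ0) m ha1 ha2] at h1
      rw [Tzpow_even] at h2
      obtain ⟨h11, h12⟩ := h1
      obtain ⟨h21, h22⟩ := h2
      dsimp only at h11 h12 h21 h22
      have Fa : -Λ ≤ rhoFlow Λ φ (-δ) a ∧ rhoFlow Λ φ (-δ) a ≤ Λ := rho_mem hΛ hφmono hφrange _ a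
      have hmle : m ≤ 0 := by
        by_contra hcon2
        push_neg at hcon2
        have h' : (1:ℝ) ≤ (m:ℝ) := by exact_mod_cast hcon2
        have hprod : Λ * (1:ℝ) ≤ Λ * (m:ℝ) := mul_le_mul_of_nonneg_left h' (le_of_lt hΛ)
        linarith [h21, Fx, ha2]
      have hmge : 0 ≤ m := by
        by_contra hcon2
        push_neg at hcon2
        have h' : (m:ℝ) ≤ -1 := by
          have h'' : m ≤ -1 := by omega
          exact_mod_cast h''
        have hprod : Λ * (m:ℝ) ≤ Λ * (-1:ℝ) := mul_le_mul_of_nonneg_left h' (le_of_lt hΛ)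
        linarith [h12, Fa.1, hA2]
      have hm0 : m = 0 := le_antisymm hmle hmge
      subst hm0
      have hzero : 4*Λ*((0:ℤ):ℝ) = 0 := by norm_num
      have ha_ge : rhoFlow Λ φ (-δ) (2 * Λ - y) ≤ a := by linarith
      have hx_ge : rhoFlow Λ φ (-δ) a ≤ x := by linarith
      rcases eq_or_lt_of_le hx02 with he | hx02'
      · rw [he, rho_top hΛ hφmono hφrange] at ha_ge
        have haeq : a = Λ := le_antisymm ha2 ha_ge
        rw [haeq, rho_top hΛ hφmono hφrange] at hx_ge
        linarith
      · have hr1 : rhoFlow Λ φ (-δ) (rhoFlow Λ φ (-δ) (2 * Λ - y)) ≤ rhoFlow Λ φ (-δ) a :=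
          rho_mono hΛ hφmono hφrange (-δ) Fx0m.1 ha2 ha_ge
        have hr2 : rhoFlow Λ φ (-δ) (rhoFlow Λ φ (-δ) (2 * Λ - y))
            = rhoFlow Λ φ (-δ + -δ) (2 * Λ - y) :=
          rho_rho hΛ hφmono hφrange hx01 hx02' (-δ) (-δ)
        have hr3 : rhoFlow Λ φ (-(2*ε)) (2 * Λ - y) < rhoFlow Λ φ (-δ + -δ) (2 * Λ - y) :=
          rho_lt_rho hΛ hφmono hφrange hx01 hx02' (by linarith)
        linarith
    · -- w upper, odd
      rw [flow_wA_odd hΛ hφmono hφrange hflowS hflowL hflowA (le_of_lt hδ0) m ha1 ha2] at h1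
      rw [Tzpow_odd] at h2
      obtain ⟨h11, h12⟩ := h1
      obtain ⟨h21, h22⟩ := h2
      dsimp only at h11 h12 h21 h22
      have Fa : -Λ < rhoFlow Λ φ (-δ) a := rho_gt_bot hΛ hφmono hφrange ha1 _
      have hmge : 0 ≤ m := by
        by_contra hcon2
        push_neg at hcon2
        have h' : (m:ℝ) ≤ -1 := by
          have h'' : m ≤ -1 := by omega
          exact_mod_cast h''
        have hprod : Λ * (m:ℝ) ≤ Λ * (-1:ℝ) := mul_le_mul_of_nonneg_left h' (le_of_lt hΛ)
        linarith [h12, Fa, hA2]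
      have hmle : m ≤ 0 := by
        by_contra hcon2
        push_neg at hcon2
        have h' : (1:ℝ) ≤ (m:ℝ) := by exact_mod_cast hcon2
        have hprod : Λ * (1:ℝ) ≤ Λ * (m:ℝ) := mul_le_mul_of_nonneg_left h' (le_of_lt hΛ)
        linarith [h22, Fx0, ha2]
      have hm0 : m = 0 := le_antisymm hmle hmge
      subst hm0
      have hzero : 4*Λ*((0:ℤ):ℝ) = 0 := by norm_num
      linarith [h21, Fx, ha2]
  · -- construct a nearby boundary point
    intro hC
    have hx02' : 2*Λ - y < Λ := by
      rcases eq_or_lt_of_le hx02 with he | h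
      · rw [he, rho_top hΛ hφmono hφrange] at hC
        linarith
      · exact h
    set A := Function.invFun φ (2*Λ - y) with hAdef
    set B := Function.invFun φ x with hBdef
    have hx0φ : φ A = 2*Λ - y := phi_psi hΛ hφmono hφrange hx01 hx02'
    have hxφ : φ B = x := phi_psi hΛ hφmono hφrange hA1 hx1
    have hBA : B < A := by
      have := hxx0
      rw [← hx0φ, ← hxφ] at this
      exact hφmono.lt_iff_lt.mp this
    have hB2 : A - 2*ε < B := by
      rw [rho_int hΛ hφmono hφrange hx01 hx02', ← hAdef] at hC
      have : φ (-(2*ε) + A) < φ B := by rw [hxφ]; exact hC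
      have := hφmono.lt_iff_lt.mp this
      linarith
    have hδ0 : 0 < (A - B)/2 := by linarith
    have hδε : (A - B)/2 < ε := by linarith
    have ha1 : -Λ < φ (A - (A - B)/2) := (phi_mem hΛ hφmono hφrange _).1
    have ha2 : φ (A - (A - B)/2) < Λ := (phi_mem hΛ hφmono hφrange _).2
    refine ⟨(φ (A - (A - B)/2), 2*Λ - φ (A - (A - B)/2)), ?_, ?_⟩
    · refine ⟨⟨by dsimp; linarith, by dsimp; linarith⟩, ?_⟩
      dsimp only
      rw [show φ (A - (A - B)/2) + (2*Λ - φ (A - (A - B)/2)) = 2*Λ by ring,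
        abs_of_nonneg (by linarith : (0:ℝ) ≤ 2*Λ)]
    · rw [dInt_lt_iff hε]
      refine ⟨(A - B)/2, hδ0, hδε, ?_, ?_⟩
      · -- Mle p (flow δ w)
        have hfw : flow ((A - B)/2) ((φ (A - (A - B)/2), 2*Λ - φ (A - (A - B)/2)) : ℝ × ℝ)
            = (rhoFlow Λ φ (-((A - B)/2)) (φ (A - (A - B)/2)),
               2 * Λ - rhoFlow Λ φ (-((A - B)/2)) (φ (A - (A - B)/2))) := by
          rw [flowA0 hΛ hφmono hφrange hflowS hflowL hflowA (le_of_lt hδ0)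
            (memA' hΛ ha1 (le_of_lt ha2))]
          have harg : 2 * Λ - ((φ (A - (A - B)/2), 2*Λ - φ (A - (A - B)/2)) : ℝ × ℝ).2
              = φ (A - (A - B)/2) := by dsimp; ring
          rw [harg]
        have hra : rhoFlow Λ φ (-((A - B)/2)) (φ (A - (A - B)/2)) = x := by
          rw [rho_phi hΛ hφmono hφrange, show -((A - B)/2) + (A - (A - B)/2) = B by ring, hxφ]
        rw [hfw, hra, Mle_def]
        constructor
        · dsimp only; linarith
        · dsimp only; linarith
      · -- Mle w (flow δ p)
        rw [flowA0 hΛ hφmono hφrange hflowS hflowL hflowA (le_of_lt hδ0) hpA, Mle_def]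
        have hr0 : rhoFlow Λ φ (-((A - B)/2)) (2 * Λ - (((x, y)) : ℝ × ℝ).2)
            = φ (-((A - B)/2) + A) := by
          have harg : (2 * Λ - (((x, y)) : ℝ × ℝ).2) = 2*Λ - y := by dsimp
          rw [harg, rho_int hΛ hφmono hφrange hx01 hx02', ← hAdef]
        have hrx : rhoFlow Λ φ (-((A - B)/2)) ((((x, y)) : ℝ × ℝ).1)
            = φ (-((A - B)/2) + B) := by
          have harg : ((((x, y)) : ℝ × ℝ).1) = x := by dsimp
          rw [harg, rho_int hΛ hφmono hφrange hA1 hx1, ← hBdef]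
        constructor
        · dsimp only
          rw [hrx]
          exact hφmono.monotone (by linarith : -((A - B)/2) + B ≤ A - (A - B)/2)
        · dsimp only
          rw [hr0]
          have : φ (-((A - B)/2) + A) = φ (A - (A - B)/2) := by
            rw [show -((A - B)/2) + A = A - (A - B)/2 by ring]
          linarith [le_of_eq this]


end cases

lemma T_comm (k : ℤ) (p : ℝ × ℝ) :
    Tmap Λ ((Tmap Λ ^ k) p) = (Tmap Λ ^ k) (Tmap Λ p) := by
  have h1 := Tzpow_add (Λ := Λ) 1 k p
  have h2 := Tzpow_add (Λ := Λ) k 1 p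
  rw [zpow_one] at h1 h2
  rw [← h1, show (1 + k : ℤ) = k + 1 by ring, h2]

lemma Dec_refl {p : ℝ × ℝ} (h : p ∈ Sset Λ ∨ p ∈ Lset Λ ∨ p ∈ Aset Λ) : Dec Λ p :=
  ⟨0, p, h, by simp⟩


/-- For `v ∈ M ∖ ∂M` and `0 < ε < ∞`, there exists `w ∈ ∂M` with `d (v, w) < ε` if and
only if `(T_M)_{2ε} v ⪯ T v` fails. -/
theorem near_boundary_iff (Λ : ℝ) (hΛ : 0 < Λ) (φ : ℝ → ℝ) (hφmono : StrictMono φ)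
    (hφrange : Set.range φ = Set.Ioo (-Λ) Λ)
    (flow : ℝ → ℝ × ℝ → ℝ × ℝ)
    (hflowS : ∀ ε : ℝ, 0 ≤ ε → ∀ k : ℤ, ∀ p ∈ Sset Λ,
      flow ε ((Tmap Λ ^ k) p) =
        (Tmap Λ ^ k) (rhoFlow Λ φ (-ε) p.1, rhoFlow Λ φ ε p.2))
    (hflowL : ∀ ε : ℝ, 0 ≤ ε → ∀ k : ℤ, ∀ p ∈ Lset Λ,
      flow ε ((Tmap Λ ^ k) p) =
        (Tmap Λ ^ k) (-(2 * Λ) - rhoFlow Λ φ ε (-(2 * Λ) - p.1), rhoFlow Λ φ ε p.2))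
    (hflowA : ∀ ε : ℝ, 0 ≤ ε → ∀ k : ℤ, ∀ p ∈ Aset Λ,
      flow ε ((Tmap Λ ^ k) p) =
        (Tmap Λ ^ k) (rhoFlow Λ φ (-ε) p.1, 2 * Λ - rhoFlow Λ φ (-ε) (2 * Λ - p.2)))
    (v : ℝ × ℝ) (hv : v ∈ Mstrip Λ) (hvb : v ∉ bdryM Λ) (ε : ℝ) (hε : 0 < ε) :
    (∃ w ∈ bdryM Λ, dInt flow v w < ENNReal.ofReal ε) ↔
      ¬ Mle (flow (2 * ε) v) (Tmap Λ v) := by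
  obtain ⟨hv1, hv2⟩ := hv
  have habs : |v.1 + v.2| ≠ 2*Λ := fun h => hvb ⟨⟨hv1, hv2⟩, h⟩
  have habs' : |v.1 + v.2| < 2*Λ :=
    lt_of_le_of_ne (abs_le.mpr ⟨by linarith, hv2⟩) habs
  obtain ⟨hi1, hi2⟩ := abs_lt.mp habs'
  obtain ⟨k, p, hveq, hp⟩ := int_decomp hΛ (by linarith) hi2
  subst hveq
  have hDecp : Dec Λ p := by
    rcases hp with h | ⟨h, _⟩ | ⟨h, _⟩
    · exact Dec_refl (Or.inl h)
    · exact Dec_refl (Or.inr (Or.inl h))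
    · exact Dec_refl (Or.inr (Or.inr h))
  have hflow_eq : flow (2 * ε) ((Tmap Λ ^ k) p) = (Tmap Λ ^ k) (flow (2 * ε) p) :=
    flow_equiv hΛ hφmono hφrange hflowS hflowL hflowA (by linarith) hDecp k
  rw [hflow_eq, T_comm, Mle_Tzpow]
  have hLHS : (∃ w ∈ bdryM Λ, dInt flow ((Tmap Λ ^ k) p) w < ENNReal.ofReal ε) ↔
      (∃ w ∈ bdryM Λ, dInt flow p w < ENNReal.ofReal ε) := by
    constructor
    · rintro ⟨w, hw, hlt⟩
      refine ⟨(Tmap Λ ^ (-k)) w, bdry_zpow (-k) hw, ?_⟩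
      have hwe : w = (Tmap Λ ^ k) ((Tmap Λ ^ (-k)) w) := by
        rw [← Tzpow_add, show (k + -k : ℤ) = 0 by ring]
        simp
      rw [hwe] at hlt
      rwa [dInt_T hΛ hφmono hφrange hflowS hflowL hflowA k hDecp
        (Dec_of_bdry hΛ (bdry_zpow (-k) hw))] at hlt
    · rintro ⟨w, hw, hlt⟩
      refine ⟨(Tmap Λ ^ k) w, bdry_zpow k hw, ?_⟩
      rwa [dInt_T hΛ hφmono hφrange hflowS hflowL hflowA k hDecp (Dec_of_bdry hΛ hw)]
  rw [hLHS]
  rcases hp with h | ⟨h, hi⟩ | ⟨h, hi⟩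
  · exact caseS hΛ hφmono hφrange hflowS hflowL hflowA h hε
  · exact caseL hΛ hφmono hφrange hflowS hflowL hflowA h hi hε
  · exact caseA hΛ hφmono hφrange hflowS hflowL hflowA h hi hε

end NB

end
end
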